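/- arXiv:2306.17804 — 11 statements merged into one kernel-verified Lean document; each statement's English description precedes it below -/
import Mathlib

section
/- Let G = (V,E) be a finite simple graph and let G_VCC be its transformed graph. For every subset C of the vertex set of G_VCC, C is a clique in G_VCC if and only if the union of the endpoints of the edges of G corresponding to the vertices in C is a clique in G. -/
open SimpleGraph

/-- The (partial) transformed graph `G'_VCC` of a graph `G` with respect to a set `E'` of
edges of `G`: one vertex per edge of `E'`, two distinct vertices adjacent iff the union of
the endpoints of their corresponding edges is a clique in `G`. -/
def SimpleGraph.transGraph {V : Type*} (G : SimpleGraph V) (E' : Set (Sym2 V)) :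
    SimpleGraph {e : Sym2 V // e ∈ E'} where
  Adj a b := a ≠ b ∧ G.IsClique ({x | x ∈ a.1} ∪ {x | x ∈ b.1})
  symm := by
    constructor
    intro a b h
    exact ⟨h.1.symm, by rw [Set.union_comm]; exact h.2⟩
  loopless := by
    constructor
    intro a h
    exact h.1 rfl

/-- The minimum cardinality of a vertex clique cover of `G`. -/
noncomputable def SimpleGraph.vccNumber {W : Type*} (G : SimpleGraph W) : ℕ :=
  sInf {n | ∃ 𝒞 : Set (Set W), 𝒞.Finite ∧ 𝒞.ncard = n ∧
    (∀ C ∈ 𝒞, G.IsClique C) ∧ ∀ w : W, ∃ C ∈ 𝒞, w ∈ C}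

/-- The minimum cardinality of a set of cliques of `G` covering every edge of `E'`. -/
noncomputable def SimpleGraph.eccNumberOn {W : Type*} (G : SimpleGraph W)
    (E' : Set (Sym2 W)) : ℕ :=
  sInf {n | ∃ 𝒞 : Set (Set W), 𝒞.Finite ∧ 𝒞.ncard = n ∧
    (∀ C ∈ 𝒞, G.IsClique C) ∧ ∀ e ∈ E', ∃ C ∈ 𝒞, ∀ x ∈ e, x ∈ C}

/-- The minimum cardinality of an edge clique cover of `G`. -/
noncomputable def SimpleGraph.eccNumber {W : Type*} (G : SimpleGraph W) : ℕ :=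
  G.eccNumberOn G.edgeSet

/-- `G` is `d`-degenerate: every nonempty (induced) subgraph has a vertex of degree at most
`d`. -/
def SimpleGraph.Degenerate {W : Type*} (G : SimpleGraph W) (d : ℕ) : Prop :=
  ∀ S : Set W, S.Nonempty → ∃ v ∈ S, {u ∈ S | G.Adj v u}.ncard ≤ d

/-- The degeneracy of `G`: the smallest `d` such that `G` is `d`-degenerate. -/
noncomputable def SimpleGraph.degeneracy {W : Type*} (G : SimpleGraph W) : ℕ :=
  sInf {d | G.Degenerate d}

/-- For every subset `C` of the vertex set of the transformed graph `G_VCC`,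
`C` is a clique in `G_VCC` iff the union of the endpoints of the edges of `G`
corresponding to the vertices in `C` is a clique in `G`. -/
theorem stmt_0 {V : Type*} [Fintype V] (G : SimpleGraph V)
    (C : Set {e : Sym2 V // e ∈ G.edgeSet}) :
    (G.transGraph G.edgeSet).IsClique C ↔ G.IsClique (⋃ e ∈ C, {x | x ∈ e.1}) := by
  constructor
  · intro h x hx y hy hxy
    simp only [Set.mem_iUnion] at hx hy
    obtain ⟨e, he, hxe⟩ := hx
    obtain ⟨f, hf, hyf⟩ := hy
    by_cases hef : e = f
    · subst hef
      obtain ⟨e, hme⟩ := e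
      induction e using Sym2.ind with
      | _ a b =>
        rw [SimpleGraph.mem_edgeSet] at hme
        simp only [Set.mem_setOf_eq, Sym2.mem_iff] at hxe hyf
        rcases hxe with rfl | rfl <;> rcases hyf with rfl | rfl
        · exact absurd rfl hxy
        · exact hme
        · exact hme.symm
        · exact absurd rfl hxy
    · have := (h he hf (by simpa using hef)).2
      exact this (Set.mem_union_left _ hxe) (Set.mem_union_right _ hyf) hxy
  · intro h a ha b hb hab
    refine ⟨hab, h.subset ?_⟩
    rintro x (hx | hx)
    · exact Set.mem_biUnion ha hx
    · exact Set.mem_biUnion hb hx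
end

section
/- For every finite simple graph G = (V,E), the minimum cardinality of a vertex clique cover of the transformed graph G_VCC equals the minimum cardinality of an edge clique cover of G, i.e., θ(G_VCC) = θ_E(G). -/
open SimpleGraph

lemma clique_of_transClique {V : Type*} (G : SimpleGraph V)
    {D : Set {e : Sym2 V // e ∈ G.edgeSet}} (hD : (G.transGraph G.edgeSet).IsClique D) :
    G.IsClique {x | ∃ e ∈ D, x ∈ e.1} := by
  rintro x ⟨e, he, hxe⟩ y ⟨f, hf, hyf⟩ hxy
  by_cases hef : e = f
  · subst hef
    have hes : e.1 = s(x, y) := (Sym2.mem_and_mem_iff hxy).mp ⟨hxe, hyf⟩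
    exact G.mem_edgeSet.mp (hes ▸ e.2)
  · have hadj := hD he hf hef
    exact hadj.2 (Set.mem_union_left _ hxe) (Set.mem_union_right _ hyf) hxy

/-- The minimum cardinality of a vertex clique cover of the transformed graph
`G_VCC` equals the minimum cardinality of an edge clique cover of `G`. -/
theorem stmt_1 {V : Type*} [Fintype V] (G : SimpleGraph V) :
    (G.transGraph G.edgeSet).vccNumber = G.eccNumber := by
  classical
  have hBne : {n | ∃ 𝒞 : Set (Set V), 𝒞.Finite ∧ 𝒞.ncard = n ∧
      (∀ C ∈ 𝒞, G.IsClique C) ∧ ∀ e ∈ G.edgeSet, ∃ C ∈ 𝒞, ∀ x ∈ e, x ∈ C}.Nonempty := by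
    refine ⟨_, (fun e => {x | x ∈ e}) '' G.edgeSet, Set.toFinite _, rfl, ?_, ?_⟩
    · rintro C ⟨e, he, rfl⟩
      intro x hx y hy hxy
      have hes : e = s(x, y) := (Sym2.mem_and_mem_iff hxy).mp ⟨hx, hy⟩
      exact G.mem_edgeSet.mp (hes ▸ he)
    · intro e he
      exact ⟨{x | x ∈ e}, ⟨e, he, rfl⟩, fun x hx => hx⟩
  have hAne : {n | ∃ 𝒞 : Set (Set {e : Sym2 V // e ∈ G.edgeSet}), 𝒞.Finite ∧ 𝒞.ncard = n ∧
      (∀ C ∈ 𝒞, (G.transGraph G.edgeSet).IsClique C) ∧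
      ∀ w, ∃ C ∈ 𝒞, w ∈ C}.Nonempty := by
    refine ⟨_, Set.range (fun a => ({a} : Set _)), Set.toFinite _, rfl, ?_, ?_⟩
    · rintro C ⟨a, rfl⟩
      exact Set.subsingleton_singleton.pairwise _
    · intro w
      exact ⟨{w}, ⟨w, rfl⟩, rfl⟩
  apply le_antisymm
  · -- vcc ≤ ecc
    have hmem := Nat.sInf_mem hBne
    obtain ⟨𝒞, hfin, hcard, hcl, hcov⟩ := hmem
    set F : Set V → Set {e : Sym2 V // e ∈ G.edgeSet} :=
      fun C => {a | ∀ x ∈ a.1, x ∈ C} with hF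
    have : (G.transGraph G.edgeSet).vccNumber ≤ (F '' 𝒞).ncard := by
      apply Nat.sInf_le
      refine ⟨F '' 𝒞, hfin.image F, rfl, ?_, ?_⟩
      · rintro D ⟨C, hC, rfl⟩
        intro a ha b hb hab
        refine ⟨hab, (hcl C hC).subset ?_⟩
        rintro x (hx | hx)
        · exact ha x hx
        · exact hb x hx
      · intro a
        obtain ⟨C, hC, hCa⟩ := hcov a.1 a.2
        exact ⟨F C, ⟨C, hC, rfl⟩, hCa⟩
    calc (G.transGraph G.edgeSet).vccNumber ≤ (F '' 𝒞).ncard := this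
      _ ≤ 𝒞.ncard := Set.ncard_image_le hfin
      _ = _ := hcard
  · -- ecc ≤ vcc
    have hmem := Nat.sInf_mem hAne
    obtain ⟨𝒟, hfin, hcard, hcl, hcov⟩ := hmem
    set F : Set {e : Sym2 V // e ∈ G.edgeSet} → Set V :=
      fun D => {x | ∃ e ∈ D, x ∈ e.1} with hF
    have : G.eccNumber ≤ (F '' 𝒟).ncard := by
      apply Nat.sInf_le
      refine ⟨F '' 𝒟, hfin.image F, rfl, ?_, ?_⟩
      · rintro C ⟨D, hD, rfl⟩
        exact clique_of_transClique G (hcl D hD)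
      · intro e he
        obtain ⟨D, hD, hDe⟩ := hcov ⟨e, he⟩
        exact ⟨F D, ⟨D, hD, rfl⟩, fun x hx => ⟨⟨e, he⟩, hDe, hx⟩⟩
    calc G.eccNumber ≤ (F '' 𝒟).ncard := this
      _ ≤ 𝒟.ncard := Set.ncard_image_le hfin
      _ = _ := hcard
end

section
/- Let G = (V,E) be a finite simple graph with m edges whose degeneracy is d. Then the number of 4-cliques (4-vertex cliques) of G is at most m · d(d−1)/2. -/
open SimpleGraph

section Aux
variable {V : Type*}

lemma fmin_spec [Nonempty V] {f : V → ℕ} (hf : Function.Injective f) (q : Finset V)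
    (h : q.Nonempty) :
    Function.invFun f ((q.image f).min' (h.image f)) ∈ q ∧
      ∀ u ∈ q, f (Function.invFun f ((q.image f).min' (h.image f))) ≤ f u := by
  obtain ⟨v, hv, hfv⟩ := Finset.mem_image.mp ((q.image f).min'_mem (h.image f))
  have hinv : Function.invFun f ((q.image f).min' (h.image f)) = v := by
    rw [← hfv]; exact Function.leftInverse_invFun hf v
  rw [hinv]
  refine ⟨hv, fun u hu => ?_⟩
  rw [hfv]
  exact Finset.min'_le _ _ (Finset.mem_image_of_mem f hu)

noncomputable def fminEl [Nonempty V] (f : V → ℕ) (q : Finset V) : V :=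
  if h : q.Nonempty then Function.invFun f ((q.image f).min' (h.image f))
  else Classical.arbitrary V

lemma fminEl_spec [Nonempty V] {f : V → ℕ} (hf : Function.Injective f) {q : Finset V}
    (h : q.Nonempty) : fminEl f q ∈ q ∧ ∀ u ∈ q, f (fminEl f q) ≤ f u := by
  rw [fminEl, dif_pos h]
  exact fmin_spec hf q h

lemma exists_order [Fintype V] {G : SimpleGraph V} {d : ℕ} (hdeg : G.Degenerate d) :
    ∃ f : V → ℕ, Function.Injective f ∧
      ∀ v, {u | G.Adj v u ∧ f v < f u}.ncard ≤ d := by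
  classical
  have key : ∀ S : Finset V, ∃ f : V → ℕ, Function.Injective f ∧
      ∀ v ∈ S, {u | u ∈ S ∧ G.Adj v u ∧ f v < f u}.ncard ≤ d := by
    intro S
    induction S using Finset.strongInduction with
    | _ S ih =>
      rcases S.eq_empty_or_nonempty with rfl | hne
      · refine ⟨fun v => (Fintype.equivFin V v : ℕ), ?_, ?_⟩
        · intro a b hab
          exact (Fintype.equivFin V).injective (Fin.val_injective hab)
        · intro v hv
          simp at hv
      · obtain ⟨v, hv, hvd⟩ := hdeg ↑S (Finset.coe_nonempty.mpr hne)
        obtain ⟨g, hg, hgd⟩ := ih (S.erase v) (Finset.erase_ssubset hv)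
        refine ⟨fun u => if u = v then 0 else g u + 1, ?_, ?_⟩
        · intro a b hab
          dsimp only at hab
          by_cases ha : a = v <;> by_cases hb : b = v
          · rw [ha, hb]
          · rw [if_pos ha, if_neg hb] at hab; omega
          · rw [if_neg ha, if_pos hb] at hab; omega
          · rw [if_neg ha, if_neg hb] at hab
            exact hg (by omega)
        · intro w hw
          by_cases hwv : w = v
          · subst hwv
            have hsub : {u | u ∈ S ∧ G.Adj w u ∧
                (if w = w then 0 else g w + 1) < (if u = w then 0 else g u + 1)} ⊆
                {u | u ∈ (↑S : Set V) ∧ G.Adj w u} := fun u hu => ⟨hu.1, hu.2.1⟩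
            exact le_trans (Set.ncard_le_ncard hsub (Set.toFinite _)) hvd
          · have hsub : {u | u ∈ S ∧ G.Adj w u ∧
                (if w = v then 0 else g w + 1) < (if u = v then 0 else g u + 1)} ⊆
                {u | u ∈ S.erase v ∧ G.Adj w u ∧ g w < g u} := by
              intro u hu
              obtain ⟨huS, hadj, hlt⟩ := hu
              rw [if_neg hwv] at hlt
              by_cases huv : u = v
              · rw [if_pos huv] at hlt; omega
              · rw [if_neg huv] at hlt
                exact ⟨Finset.mem_erase.mpr ⟨huv, huS⟩, hadj, by omega⟩
            exact le_trans (Set.ncard_le_ncard hsub (Set.toFinite _))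
              (hgd w (Finset.mem_erase.mpr ⟨hwv, hw⟩))
  obtain ⟨f, hf, hford⟩ := key Finset.univ
  refine ⟨f, hf, fun v => ?_⟩
  have := hford v (Finset.mem_univ v)
  simpa using this

end Aux


lemma keyAB_spec {V : Type*} [DecidableEq V] [Nonempty V] {f : V → ℕ}
    (hf : Function.Injective f) {q : Finset V} (h2 : 2 ≤ q.card) :
    fminEl f q ∈ q ∧ fminEl f (q.erase (fminEl f q)) ∈ q ∧
      fminEl f q ≠ fminEl f (q.erase (fminEl f q)) ∧
      f (fminEl f q) < f (fminEl f (q.erase (fminEl f q))) ∧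
      (∀ u ∈ q, u ≠ fminEl f q → u ≠ fminEl f (q.erase (fminEl f q)) →
        f (fminEl f (q.erase (fminEl f q))) < f u) := by
  have h1 : q.Nonempty := Finset.card_pos.mp (by omega)
  obtain ⟨hA, hAmin⟩ := fminEl_spec hf h1
  have h2' : (q.erase (fminEl f q)).Nonempty := by
    apply Finset.card_pos.mp
    rw [Finset.card_erase_of_mem hA]
    omega
  obtain ⟨hB, hBmin⟩ := fminEl_spec hf h2'
  have hBq : fminEl f (q.erase (fminEl f q)) ∈ q := Finset.mem_of_mem_erase hB
  have hAB : fminEl f q ≠ fminEl f (q.erase (fminEl f q)) :=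
    (Finset.ne_of_mem_erase hB).symm
  refine ⟨hA, hBq, hAB, ?_, ?_⟩
  · exact lt_of_le_of_ne (hAmin _ hBq) (fun hc => hAB (hf hc))
  · intro u hu hneA hneB
    exact lt_of_le_of_ne (hBmin u (Finset.mem_erase.mpr ⟨hneA, hu⟩))
      (fun hc => hneB (hf hc).symm)

/-- If `G` has `m` edges and degeneracy `d`, then the number of
4-cliques (4-vertex cliques) of `G` is at most `m * d * (d - 1) / 2`. -/
theorem stmt_5 {V : Type*} [Fintype V] (G : SimpleGraph V) (d : ℕ)
    (hd : G.degeneracy = d) :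
    {q : Finset V | G.IsNClique 4 q}.ncard ≤ G.edgeSet.ncard * (d * (d - 1) / 2) := by
  classical
  have hDeg : G.Degenerate d := by
    have hmem : (Fintype.card V) ∈ {n | G.Degenerate n} := by
      intro S hS
      obtain ⟨v, hv⟩ := hS
      refine ⟨v, hv, ?_⟩
      calc {u ∈ S | G.Adj v u}.ncard ≤ (Set.univ : Set V).ncard :=
            Set.ncard_le_ncard (fun u _ => Set.mem_univ u) Set.finite_univ
        _ = Fintype.card V := by rw [Set.ncard_univ, Nat.card_eq_fintype_card]
    have hmem2 := Nat.sInf_mem (⟨_, hmem⟩ : {n | G.Degenerate n}.Nonempty)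
    rw [SimpleGraph.degeneracy] at hd
    rw [hd] at hmem2
    exact hmem2
  rcases isEmpty_or_nonempty V with hV | hV
  · have hempty : {q : Finset V | G.IsNClique 4 q} = ∅ := by
      ext q
      simp only [Set.mem_setOf_eq, Set.mem_empty_iff_false, iff_false]
      intro hq
      have h4 := hq.card_eq
      have hle : q.card ≤ Fintype.card V := Finset.card_le_univ q
      rw [Fintype.card_eq_zero] at hle
      omega
    rw [hempty]
    simp
  · obtain ⟨f, hf, hford⟩ := exists_order hDeg
    letI : Fintype G.edgeSet := Fintype.ofFinite _
    set Q : Finset (Finset V) := Finset.univ.filter (fun q => G.IsNClique 4 q) with hQdef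
    have hQ4 : ∀ q ∈ Q, G.IsNClique 4 q := by
      intro q hq
      exact (Finset.mem_filter.mp hq).2
    have hQcard : {q : Finset V | G.IsNClique 4 q}.ncard = Q.card := by
      rw [show {q : Finset V | G.IsNClique 4 q} = ↑Q by ext q; simp [hQdef]]
      exact Set.ncard_coe_finset Q
    have hEcard : G.edgeSet.ncard = G.edgeFinset.card := by
      rw [← SimpleGraph.coe_edgeFinset, Set.ncard_coe_finset]
    have hmap : ∀ q ∈ Q, s(fminEl f q, fminEl f (q.erase (fminEl f q))) ∈ G.edgeFinset := by
      intro q hq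
      have hcl := hQ4 q hq
      obtain ⟨hA, hB, hAB, hfAB, hstrB⟩ := keyAB_spec hf (q := q)
        (by rw [hcl.card_eq]; omega)
      rw [SimpleGraph.mem_edgeFinset, SimpleGraph.mem_edgeSet]
      exact hcl.isClique (Finset.mem_coe.mpr hA) (Finset.mem_coe.mpr hB) hAB
    rw [hQcard, hEcard,
      Finset.card_eq_sum_card_fiberwise hmap]
    have hfiber : ∀ e ∈ G.edgeFinset,
        (Q.filter fun q => s(fminEl f q, fminEl f (q.erase (fminEl f q))) = e).card
          ≤ d * (d - 1) / 2 := by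
      intro e _
      rcases (Q.filter fun q =>
          s(fminEl f q, fminEl f (q.erase (fminEl f q))) = e).eq_empty_or_nonempty with
        hF | ⟨q0, hq0⟩
      · rw [hF, Finset.card_empty]
        exact Nat.zero_le _
      · obtain ⟨hq0Q, hq0e⟩ := Finset.mem_filter.mp hq0
        obtain ⟨hv0, ha0, hva0, hfva0, -⟩ :=
          keyAB_spec hf (q := q0) (by rw [(hQ4 q0 hq0Q).card_eq]; omega)
        set v : V := fminEl f q0 with hvdef
        set a : V := fminEl f (q0.erase v) with hadef
        have hfacts : ∀ q ∈ (Q.filter fun q =>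
            s(fminEl f q, fminEl f (q.erase (fminEl f q))) = e),
            v ∈ q ∧ a ∈ q ∧ q.card = 4 ∧
              (∀ u ∈ q, u ≠ v → u ≠ a → G.Adj a u ∧ f a < f u) := by
          intro q hq
          obtain ⟨hqQ, hqe⟩ := Finset.mem_filter.mp hq
          obtain ⟨hA, hB, hAB, hfAB, hstrB⟩ :=
            keyAB_spec hf (q := q) (by rw [(hQ4 q hqQ).card_eq]; omega)
          have heq : s(fminEl f q, fminEl f (q.erase (fminEl f q))) = s(v, a) :=
            hqe.trans hq0e.symm
          rcases Sym2.eq_iff.mp heq with ⟨h1, h2⟩ | ⟨h1, h2⟩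
          · rw [h2, h1] at hAB hfAB hstrB
            rw [h1] at hA
            rw [h2] at hB
            refine ⟨hA, hB, (hQ4 q hqQ).card_eq, fun u hu huv hua => ?_⟩
            refine ⟨?_, hstrB u hu huv hua⟩
            have hau : a ≠ u := fun hc => hua hc.symm
            exact ((hQ4 q hqQ).isClique (Finset.mem_coe.mpr hB)
              (Finset.mem_coe.mpr hu) hau)
          · exfalso
            rw [h2, h1] at hfAB
            exact absurd hfAB (lt_asymm hfva0)
        have hNsub : ∀ q ∈ (Q.filter fun q =>
            s(fminEl f q, fminEl f (q.erase (fminEl f q))) = e),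
            q \ {v, a} ∈ (Finset.univ.filter
              (fun u => G.Adj a u ∧ f a < f u)).powersetCard 2 := by
          intro q hq
          obtain ⟨hvq, haq, hq4, hrest⟩ := hfacts q hq
          rw [Finset.mem_powersetCard]
          constructor
          · intro u hu
            obtain ⟨huq, hupair⟩ := Finset.mem_sdiff.mp hu
            simp only [Finset.mem_insert, Finset.mem_singleton] at hupair
            push_neg at hupair
            obtain ⟨hadj, hlt⟩ := hrest u huq hupair.1 hupair.2
            simp only [Finset.mem_filter, Finset.mem_univ, true_and]
            exact ⟨hadj, hlt⟩
          · have hsub : {v, a} ⊆ q := by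
              intro u hu
              simp only [Finset.mem_insert, Finset.mem_singleton] at hu
              rcases hu with rfl | rfl
              · exact hvq
              · exact haq
            have hva' : v ∉ ({a} : Finset V) := by simp [hva0]
            have hc2 : ({v, a} : Finset V).card = 2 := by
              rw [Finset.card_insert_of_notMem hva', Finset.card_singleton]
            rw [Finset.card_sdiff_of_subset hsub, hq4, hc2]
        have hinj : Set.InjOn (fun q : Finset V => q \ {v, a})
            ↑(Q.filter fun q =>
              s(fminEl f q, fminEl f (q.erase (fminEl f q))) = e) := by
          intro q hq q' hq' hqq'
          obtain ⟨hvq, haq, -, -⟩ := hfacts q (Finset.mem_coe.mp hq)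
          obtain ⟨hvq', haq', -, -⟩ := hfacts q' (Finset.mem_coe.mp hq')
          have hsub : {v, a} ⊆ q := by
            intro u hu
            simp only [Finset.mem_insert, Finset.mem_singleton] at hu
            rcases hu with rfl | rfl
            · exact hvq
            · exact haq
          have hsub' : {v, a} ⊆ q' := by
            intro u hu
            simp only [Finset.mem_insert, Finset.mem_singleton] at hu
            rcases hu with rfl | rfl
            · exact hvq'
            · exact haq'
          have := congrArg (fun s => s ∪ ({v, a} : Finset V)) hqq'
          simpa [Finset.sdiff_union_of_subset hsub,
            Finset.sdiff_union_of_subset hsub'] using this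
        calc (Q.filter fun q =>
              s(fminEl f q, fminEl f (q.erase (fminEl f q))) = e).card
            ≤ ((Finset.univ.filter
              (fun u => G.Adj a u ∧ f a < f u)).powersetCard 2).card :=
              Finset.card_le_card_of_injOn _ hNsub hinj
          _ = (Finset.univ.filter (fun u => G.Adj a u ∧ f a < f u)).card.choose 2 :=
              Finset.card_powersetCard 2 _
          _ ≤ d.choose 2 := by
              apply Nat.choose_le_choose
              calc (Finset.univ.filter (fun u => G.Adj a u ∧ f a < f u)).card
                  = (↑(Finset.univ.filter (fun u => G.Adj a u ∧ f a < f u)) :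
                      Set V).ncard := (Set.ncard_coe_finset _).symm
                _ = {u | G.Adj a u ∧ f a < f u}.ncard := by
                    congr 1
                    ext u
                    simp
                _ ≤ d := hford a
          _ = d * (d - 1) / 2 := Nat.choose_two_right d
    calc ∑ e ∈ G.edgeFinset,
          (Q.filter fun q => s(fminEl f q, fminEl f (q.erase (fminEl f q))) = e).card
        ≤ ∑ _e ∈ G.edgeFinset, (d * (d - 1) / 2) := Finset.sum_le_sum hfiber
      _ = G.edgeFinset.card * (d * (d - 1) / 2) := by
          rw [Finset.sum_const, smul_eq_mul]
end

section
/- Let G = (V,E) be a finite simple graph, let T be the number of triangles of G and Q the number of 4-cliques of G. Then the number of edges of the transformed graph G_VCC is at most 3T + 3Q. -/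
open SimpleGraph

section VCC6Aux

open Finset

variable {V : Type*} [DecidableEq V]

noncomputable def vccTF : Sym2 V → Finset V :=
  Sym2.lift ⟨fun x y => {x, y}, fun x y => Finset.pair_comm x y⟩

@[simp] lemma vccTF_mk (x y : V) : vccTF s(x, y) = {x, y} := rfl

lemma mem_vccTF {a : V} {e : Sym2 V} : a ∈ vccTF e ↔ a ∈ e := by
  induction e using Sym2.ind with
  | _ x y => simp [Sym2.mem_iff]

lemma vccTF_nonempty (e : Sym2 V) : (vccTF e).Nonempty := by
  induction e using Sym2.ind with
  | _ x y => simp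

lemma coe_vccTF (e : Sym2 V) : (vccTF e : Set V) = {x | x ∈ e} := by
  ext a; simp [mem_vccTF]

lemma vccTF_card_edge (G : SimpleGraph V) (e : Sym2 V) :
    e ∈ G.edgeSet → (vccTF e).card = 2 := by
  induction e using Sym2.ind with
  | _ x y =>
    intro he
    rw [vccTF_mk]
    exact Finset.card_pair ((SimpleGraph.mem_edgeSet G).mp he).ne

lemma vccTF_inj {e f : Sym2 V} (h : vccTF e = vccTF f) : e = f :=
  Sym2.ext fun x => by rw [← mem_vccTF, ← mem_vccTF, h]

lemma vcc_pair_eq {x y x' y' : V} (h : ({x, y} : Finset V) = {x', y'}) :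
    (x = x' ∧ y = y') ∨ (x = y' ∧ y = x') := by
  have h2 : ({x, y} : Set V) = {x', y'} := by
    have := congrArg (fun s : Finset V => (s : Set V)) h
    simpa using this
  exact Set.pair_eq_pair_iff.mp h2

lemma vcc_inter_card_le {a b : Finset V} (ha : a.card = 2) (hb : b.card = 2) (hne : a ≠ b) :
    (a ∩ b).card ≤ 1 := by
  by_contra hlt
  push_neg at hlt
  have h1 : a ∩ b = a :=
    Finset.eq_of_subset_of_card_le Finset.inter_subset_left (by omega)
  have h2 : a ⊆ b := Finset.inter_eq_left.mp h1
  exact hne (Finset.eq_of_subset_of_card_le h2 (by omega))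

lemma vcc_compl {t a b : Finset V} (hu : a ∪ b = t) (hi : a ∩ b = ∅) : b = t \ a := by
  subst hu
  ext x
  have := Finset.eq_empty_iff_forall_notMem.mp hi x
  simp only [Finset.mem_inter] at this
  simp only [Finset.mem_sdiff, Finset.mem_union]
  tauto

lemma vcc_tri_key {t a b a' b' : Finset V} (ht : t.card = 3)
    (ha : a.card = 2) (hb : b.card = 2) (ha' : a'.card = 2) (hb' : b'.card = 2)
    (hab : a ≠ b) (hab' : a' ≠ b') (hu : a ∪ b = t) (hu' : a' ∪ b' = t)
    (hi : a ∩ b = a' ∩ b') :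
    (a = a' ∧ b = b') ∨ (a = b' ∧ b = a') := by
  have hsa : a ⊆ t := hu ▸ Finset.subset_union_left
  have hsb : b ⊆ t := hu ▸ Finset.subset_union_right
  have hsa' : a' ⊆ t := hu' ▸ Finset.subset_union_left
  have hsb' : b' ⊆ t := hu' ▸ Finset.subset_union_right
  have hca : (t \ a).card = 1 := by rw [Finset.card_sdiff_of_subset hsa]; omega
  have hcb : (t \ b).card = 1 := by rw [Finset.card_sdiff_of_subset hsb]; omega
  have hca' : (t \ a').card = 1 := by rw [Finset.card_sdiff_of_subset hsa']; omega
  have hcb' : (t \ b').card = 1 := by rw [Finset.card_sdiff_of_subset hsb']; omega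
  have hdistrib : ∀ x y : Finset V, t \ (x ∩ y) = (t \ x) ∪ (t \ y) := by
    intro x y; ext u
    simp only [Finset.mem_sdiff, Finset.mem_inter, Finset.mem_union]
    tauto
  have hkey : (t \ a) ∪ (t \ b) = (t \ a') ∪ (t \ b') := by
    rw [← hdistrib, ← hdistrib, hi]
  obtain ⟨p, hp⟩ := Finset.card_eq_one.mp hca
  obtain ⟨q, hq⟩ := Finset.card_eq_one.mp hcb
  obtain ⟨p', hp'⟩ := Finset.card_eq_one.mp hca'
  obtain ⟨q', hq'⟩ := Finset.card_eq_one.mp hcb'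
  have hrec : ∀ x : Finset V, x ⊆ t → t \ (t \ x) = x := fun x hx =>
    Finset.sdiff_sdiff_eq_self hx
  have hpq : ({p, q} : Finset V) = {p', q'} := by
    have : ({p} : Finset V) ∪ {q} = {p'} ∪ {q'} := by rw [← hp, ← hq, ← hp', ← hq', hkey]
    simpa using this
  rcases vcc_pair_eq hpq with ⟨h1, h2⟩ | ⟨h1, h2⟩
  · left
    constructor
    · rw [← hrec a hsa, ← hrec a' hsa', hp, hp', h1]
    · rw [← hrec b hsb, ← hrec b' hsb', hq, hq', h2]
  · right
    constructor
    · rw [← hrec a hsa, ← hrec b' hsb', hp, hq', h1]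
    · rw [← hrec b hsb, ← hrec a' hsa', hq, hp', h2]

variable (G : SimpleGraph V)

noncomputable def vccU : Sym2 {e : Sym2 V // e ∈ G.edgeSet} → Finset V :=
  Sym2.lift ⟨fun a b => vccTF a.1 ∪ vccTF b.1, fun a b => Finset.union_comm _ _⟩

@[simp] lemma vccU_mk (a b : {e : Sym2 V // e ∈ G.edgeSet}) :
    vccU G s(a, b) = vccTF a.1 ∪ vccTF b.1 := rfl

lemma vccU_nonempty (z : Sym2 {e : Sym2 V // e ∈ G.edgeSet}) : (vccU G z).Nonempty := by
  induction z using Sym2.ind with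
  | _ a b => exact (vccTF_nonempty a.1).mono Finset.subset_union_left

noncomputable def vccI : Sym2 {e : Sym2 V // e ∈ G.edgeSet} → Finset V :=
  Sym2.lift ⟨fun a b => vccTF a.1 ∩ vccTF b.1, fun a b => Finset.inter_comm _ _⟩

@[simp] lemma vccI_mk (a b : {e : Sym2 V // e ∈ G.edgeSet}) :
    vccI G s(a, b) = vccTF a.1 ∩ vccTF b.1 := rfl

variable [LinearOrder V]

noncomputable def vccM (z : Sym2 {e : Sym2 V // e ∈ G.edgeSet}) : V :=
  (vccU G z).min' (vccU_nonempty G z)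

lemma vccM_eq_of_eq {z : Sym2 {e : Sym2 V // e ∈ G.edgeSet}} {t : Finset V}
    (h : vccU G z = t) (ht : t.Nonempty) : vccM G z = t.min' ht := by
  subst h; rfl

noncomputable def vccSel : Sym2 {e : Sym2 V // e ∈ G.edgeSet} → Finset V :=
  Sym2.lift ⟨fun a b =>
    if vccM G s(a, b) ∈ vccTF a.1 ∧ vccM G s(a, b) ∉ vccTF b.1 then vccTF a.1
    else if vccM G s(a, b) ∈ vccTF b.1 ∧ vccM G s(a, b) ∉ vccTF a.1 then vccTF b.1
    else ∅, by
      intro a b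
      have hm : vccM G s(a, b) = vccM G s(b, a) := by rw [Sym2.eq_swap]
      beta_reduce
      rw [← hm]
      by_cases h1 : vccM G s(a, b) ∈ vccTF a.1 ∧ vccM G s(a, b) ∉ vccTF b.1 <;>
        by_cases h2 : vccM G s(a, b) ∈ vccTF b.1 ∧ vccM G s(a, b) ∉ vccTF a.1 <;>
        simp [h1, h2] <;> tauto⟩

lemma vccSel_mk_left (a b : {e : Sym2 V // e ∈ G.edgeSet})
    (h1 : vccM G s(a, b) ∈ vccTF a.1) (h2 : vccM G s(a, b) ∉ vccTF b.1) :
    vccSel G s(a, b) = vccTF a.1 := by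
  simp only [vccSel, Sym2.lift_mk]
  rw [if_pos ⟨h1, h2⟩]

lemma vccSel_mk_right (a b : {e : Sym2 V // e ∈ G.edgeSet})
    (h1 : vccM G s(a, b) ∈ vccTF b.1) (h2 : vccM G s(a, b) ∉ vccTF a.1) :
    vccSel G s(a, b) = vccTF b.1 := by
  simp only [vccSel, Sym2.lift_mk]
  rw [if_neg (by tauto), if_pos ⟨h1, h2⟩]

end VCC6Aux

/-- If `T` is the number of triangles of `G` and `Q` is the number of
4-cliques of `G`, then the number of edges of the transformed graph `G_VCC` is at most
`3 * T + 3 * Q`. -/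
theorem stmt_6 {V : Type*} [Fintype V] (G : SimpleGraph V) (T Q : ℕ)
    (hT : T = {t : Finset V | G.IsNClique 3 t}.ncard)
    (hQ : Q = {q : Finset V | G.IsNClique 4 q}.ncard) :
    (G.transGraph G.edgeSet).edgeSet.ncard ≤ 3 * T + 3 * Q := by
  classical
  letI : LinearOrder V := LinearOrder.lift' (Fintype.equivFin V) (Fintype.equivFin V).injective
  have hfin : (G.transGraph G.edgeSet).edgeSet.Finite := Set.toFinite _
  have hfin3 : {t : Finset V | G.IsNClique 3 t}.Finite := Set.toFinite _
  have hfin4 : {q : Finset V | G.IsNClique 4 q}.Finite := Set.toFinite _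
  rw [hT, hQ, Set.ncard_eq_toFinset_card _ hfin, Set.ncard_eq_toFinset_card _ hfin3,
    Set.ncard_eq_toFinset_card _ hfin4]
  set F := hfin.toFinset with hF
  set 𝒯 := hfin3.toFinset with h𝒯
  set 𝒬 := hfin4.toFinset with h𝒬
  -- basic facts about members of F
  have edge_facts : ∀ A B : {e : Sym2 V // e ∈ G.edgeSet}, s(A, B) ∈ F →
      (vccTF A.1).card = 2 ∧ (vccTF B.1).card = 2 ∧ vccTF A.1 ≠ vccTF B.1 ∧
        G.IsClique (↑(vccU G s(A, B)) : Set V) ∧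
        ((vccU G s(A, B)).card = 3 ∨ (vccU G s(A, B)).card = 4) := by
    intro A B hz
    rw [hF, Set.Finite.mem_toFinset, SimpleGraph.mem_edgeSet] at hz
    obtain ⟨hne, hcl⟩ := hz
    have hA : (vccTF A.1).card = 2 := vccTF_card_edge G A.1 A.2
    have hB : (vccTF B.1).card = 2 := vccTF_card_edge G B.1 B.2
    have hAB : vccTF A.1 ≠ vccTF B.1 := fun h => hne (Subtype.ext (vccTF_inj h))
    have hclq : G.IsClique (↑(vccU G s(A, B)) : Set V) := by
      rw [vccU_mk, Finset.coe_union, coe_vccTF, coe_vccTF]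
      exact hcl
    have hint := vcc_inter_card_le hA hB hAB
    have hsum := Finset.card_union_add_card_inter (vccTF A.1) (vccTF B.1)
    refine ⟨hA, hB, hAB, hclq, ?_⟩
    rw [vccU_mk]
    omega
  have clique_of_mem : ∀ z ∈ F, G.IsClique (↑(vccU G z) : Set V) := by
    intro z
    induction z using Sym2.ind with
    | _ A B => exact fun hz => (edge_facts A B hz).2.2.2.1
  have card34_of_mem : ∀ z ∈ F, (vccU G z).card = 3 ∨ (vccU G z).card = 4 := by
    intro z
    induction z using Sym2.ind with
    | _ A B => exact fun hz => (edge_facts A B hz).2.2.2.2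
  set P3 := F.filter (fun z => (vccU G z).card = 3) with hP3
  set P4 := F.filter (fun z => ¬(vccU G z).card = 3) with hP4
  have hFsplit : F.card ≤ P3.card + P4.card := by
    rw [hP3, hP4]
    calc F.card = (F.filter (fun z => (vccU G z).card = 3) ∪
          F.filter (fun z => ¬(vccU G z).card = 3)).card := by
            rw [Finset.filter_union_filter_not_eq]
      _ ≤ _ := Finset.card_union_le _ _
  -- triangle part
  have hsub3 : P3 ⊆ 𝒯.biUnion (fun t => P3.filter (fun z => vccU G z = t)) := by
    intro z hz
    rw [Finset.mem_biUnion]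
    obtain ⟨hzF, hz3⟩ := Finset.mem_filter.mp hz
    refine ⟨vccU G z, ?_, Finset.mem_filter.mpr ⟨hz, rfl⟩⟩
    rw [h𝒯, Set.Finite.mem_toFinset]
    exact ⟨clique_of_mem z hzF, hz3⟩
  have hfib3 : ∀ t ∈ 𝒯, (P3.filter (fun z => vccU G z = t)).card ≤ 3 := by
    intro t ht
    rw [h𝒯, Set.Finite.mem_toFinset] at ht
    have ht3 : t.card = 3 := ht.2
    have hfacts : ∀ z ∈ P3.filter (fun z => vccU G z = t),
        (vccI G z).card = 1 ∧ vccI G z ⊆ t := by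
      intro z hz
      obtain ⟨hzP, hzt⟩ := Finset.mem_filter.mp hz
      obtain ⟨hzF, hz3⟩ := Finset.mem_filter.mp hzP
      revert hzF hz3 hzt
      induction z using Sym2.ind with
      | _ A B =>
        intro hzt hzF hz3
        obtain ⟨hA, hB, hAB, -, -⟩ := edge_facts A B hzF
        have hsum := Finset.card_union_add_card_inter (vccTF A.1) (vccTF B.1)
        rw [vccU_mk] at hz3 hzt
        rw [vccI_mk]
        constructor
        · omega
        · exact Finset.inter_subset_left.trans (hzt ▸ Finset.subset_union_left)
    calc (P3.filter (fun z => vccU G z = t)).card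
        ≤ (t.image (fun v => ({v} : Finset V))).card := by
          apply Finset.card_le_card_of_injOn (vccI G)
          · intro z hz
            obtain ⟨h1, h2⟩ := hfacts z hz
            obtain ⟨v, hv⟩ := Finset.card_eq_one.mp h1
            exact Finset.mem_image.mpr ⟨v, h2 (by simp [hv]), hv.symm⟩
          · intro z hz z' hz' hI
            rw [Finset.mem_coe] at hz hz'
            revert hz hz' hI
            induction z using Sym2.ind with
            | _ A B =>
              induction z' using Sym2.ind with
              | _ A' B' =>
                intro hz hz' hI
                obtain ⟨hzP, hzt⟩ := Finset.mem_filter.mp hz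
                obtain ⟨hzF, -⟩ := Finset.mem_filter.mp hzP
                obtain ⟨hzP', hzt'⟩ := Finset.mem_filter.mp hz'
                obtain ⟨hzF', -⟩ := Finset.mem_filter.mp hzP'
                obtain ⟨hA, hB, hAB, -, -⟩ := edge_facts A B hzF
                obtain ⟨hA', hB', hAB', -, -⟩ := edge_facts A' B' hzF'
                rw [vccU_mk] at hzt hzt'
                rw [vccI_mk, vccI_mk] at hI
                rcases vcc_tri_key ht3 hA hB hA' hB' hAB hAB' hzt hzt' hI with
                  ⟨h1, h2⟩ | ⟨h1, h2⟩
                · rw [Sym2.eq_iff]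
                  exact Or.inl ⟨Subtype.ext (vccTF_inj h1), Subtype.ext (vccTF_inj h2)⟩
                · rw [Sym2.eq_iff]
                  exact Or.inr ⟨Subtype.ext (vccTF_inj h1), Subtype.ext (vccTF_inj h2)⟩
      _ ≤ t.card := Finset.card_image_le
      _ = 3 := ht3
  have hbound3 : P3.card ≤ 3 * 𝒯.card := by
    calc P3.card ≤ (𝒯.biUnion (fun t => P3.filter (fun z => vccU G z = t))).card :=
          Finset.card_le_card hsub3
      _ ≤ ∑ t ∈ 𝒯, (P3.filter (fun z => vccU G z = t)).card := Finset.card_biUnion_le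
      _ ≤ ∑ _t ∈ 𝒯, 3 := Finset.sum_le_sum hfib3
      _ = 3 * 𝒯.card := by rw [Finset.sum_const, smul_eq_mul, mul_comm]
  -- quadrilateral part
  have hsub4 : P4 ⊆ 𝒬.biUnion (fun t => P4.filter (fun z => vccU G z = t)) := by
    intro z hz
    rw [Finset.mem_biUnion]
    obtain ⟨hzF, hz3⟩ := Finset.mem_filter.mp hz
    refine ⟨vccU G z, ?_, Finset.mem_filter.mpr ⟨hz, rfl⟩⟩
    rw [h𝒬, Set.Finite.mem_toFinset]
    have h4 : (vccU G z).card = 4 := by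
      rcases card34_of_mem z hzF with h | h
      · exact absurd h hz3
      · exact h
    exact ⟨clique_of_mem z hzF, h4⟩
  have hfib4 : ∀ t ∈ 𝒬, (P4.filter (fun z => vccU G z = t)).card ≤ 3 := by
    intro t ht
    rw [h𝒬, Set.Finite.mem_toFinset] at ht
    have ht4 : t.card = 4 := ht.2
    have htne : t.Nonempty := Finset.card_pos.mp (by omega)
    set m := t.min' htne with hm
    have hmt : m ∈ t := t.min'_mem htne
    have pick : ∀ c : Finset V, c.card = 2 → m ∈ c → ∃ w, w ≠ m ∧ w ∈ c ∧ c = {m, w} := by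
      intro c hc hmc
      obtain ⟨x, y, hxy, rfl⟩ := Finset.card_eq_two.mp hc
      rcases Finset.mem_insert.mp hmc with h | h
      · exact ⟨y, fun hh => hxy (hh.trans h).symm, by simp, by rw [h]⟩
      · rw [Finset.mem_singleton] at h
        exact ⟨x, fun hh => hxy (hh.trans h), by simp, by rw [← h, Finset.pair_comm]⟩
    -- facts for members of the fiber
    have hfacts : ∀ A B : {e : Sym2 V // e ∈ G.edgeSet},
        s(A, B) ∈ P4.filter (fun z => vccU G z = t) →
        (vccTF A.1).card = 2 ∧ (vccTF B.1).card = 2 ∧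
        vccTF A.1 ∪ vccTF B.1 = t ∧ vccTF A.1 ∩ vccTF B.1 = ∅ ∧
        vccM G s(A, B) = m := by
      intro A B hz
      obtain ⟨hzP, hzt⟩ := Finset.mem_filter.mp hz
      obtain ⟨hzF, hz3⟩ := Finset.mem_filter.mp hzP
      obtain ⟨hA, hB, hAB, -, -⟩ := edge_facts A B hzF
      rw [vccU_mk] at hzt
      have h4 : t.card = 4 := ht4
      have hsum := Finset.card_union_add_card_inter (vccTF A.1) (vccTF B.1)
      rw [hzt] at hsum
      have hint : (vccTF A.1 ∩ vccTF B.1).card = 0 := by omega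
      refine ⟨hA, hB, hzt, Finset.card_eq_zero.mp hint, ?_⟩
      exact vccM_eq_of_eq G (by rw [vccU_mk]; exact hzt) htne
    calc (P4.filter (fun z => vccU G z = t)).card
        ≤ ((t.erase m).image (fun w => ({m, w} : Finset V))).card := by
          apply Finset.card_le_card_of_injOn (vccSel G)
          · intro z hz
            revert hz
            induction z using Sym2.ind with
            | _ A B =>
              intro hz
              obtain ⟨hA, hB, hu, hi, hM⟩ := hfacts A B hz
              have hdisj : ∀ x, x ∈ vccTF A.1 → x ∉ vccTF B.1 := by
                intro x h1 h2
                have : x ∈ vccTF A.1 ∩ vccTF B.1 := Finset.mem_inter.mpr ⟨h1, h2⟩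
                simp [hi] at this
              have hdisj' : ∀ x, x ∈ vccTF B.1 → x ∉ vccTF A.1 := by
                intro x h1 h2
                have : x ∈ vccTF A.1 ∩ vccTF B.1 := Finset.mem_inter.mpr ⟨h2, h1⟩
                simp [hi] at this
              have hmu : m ∈ vccTF A.1 ∪ vccTF B.1 := hu ▸ hmt
              rcases Finset.mem_union.mp hmu with hma | hmb
              · have hsel : vccSel G s(A, B) = vccTF A.1 :=
                  vccSel_mk_left G A B (hM ▸ hma) (hM ▸ hdisj m hma)
                obtain ⟨w, hw1, hw2, hw3⟩ := pick _ hA hma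
                refine Finset.mem_image.mpr ⟨w, Finset.mem_erase.mpr ⟨hw1, ?_⟩, ?_⟩
                · exact hu ▸ Finset.mem_union_left _ hw2
                · rw [hsel, hw3]
              · have hsel : vccSel G s(A, B) = vccTF B.1 :=
                  vccSel_mk_right G A B (hM ▸ hmb) (hM ▸ hdisj' m hmb)
                obtain ⟨w, hw1, hw2, hw3⟩ := pick _ hB hmb
                refine Finset.mem_image.mpr ⟨w, Finset.mem_erase.mpr ⟨hw1, ?_⟩, ?_⟩
                · exact hu ▸ Finset.mem_union_right _ hw2
                · rw [hsel, hw3]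
          · intro z hz z' hz' hS
            rw [Finset.mem_coe] at hz hz'
            revert hz hz' hS
            induction z using Sym2.ind with
            | _ A B =>
              induction z' using Sym2.ind with
              | _ A' B' =>
                intro hz hz' hS
                obtain ⟨hA, hB, hu, hi, hM⟩ := hfacts A B hz
                obtain ⟨hA', hB', hu', hi', hM'⟩ := hfacts A' B' hz'
                have hcb : vccTF B.1 = t \ vccTF A.1 := vcc_compl hu hi
                have hcb' : vccTF B'.1 = t \ vccTF A'.1 := vcc_compl hu' hi'
                have hca : vccTF A.1 = t \ vccTF B.1 :=
                  vcc_compl (by rw [Finset.union_comm]; exact hu)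
                    (by rw [Finset.inter_comm]; exact hi)
                have hca' : vccTF A'.1 = t \ vccTF B'.1 :=
                  vcc_compl (by rw [Finset.union_comm]; exact hu')
                    (by rw [Finset.inter_comm]; exact hi')
                have hnab : ∀ x, x ∈ vccTF A.1 → x ∉ vccTF B.1 := by
                  intro x h1 h2
                  have : x ∈ vccTF A.1 ∩ vccTF B.1 := Finset.mem_inter.mpr ⟨h1, h2⟩
                  simp [hi] at this
                have hnab' : ∀ x, x ∈ vccTF A'.1 → x ∉ vccTF B'.1 := by
                  intro x h1 h2
                  have : x ∈ vccTF A'.1 ∩ vccTF B'.1 := Finset.mem_inter.mpr ⟨h1, h2⟩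
                  simp [hi'] at this
                have hmu : m ∈ vccTF A.1 ∪ vccTF B.1 := hu ▸ hmt
                have hmu' : m ∈ vccTF A'.1 ∪ vccTF B'.1 := hu' ▸ hmt
                rw [Sym2.eq_iff]
                rcases Finset.mem_union.mp hmu with hma | hmb <;>
                  rcases Finset.mem_union.mp hmu' with hma' | hmb'
                · have hs1 : vccSel G s(A, B) = vccTF A.1 :=
                    vccSel_mk_left G A B (hM ▸ hma) (hM ▸ hnab m hma)
                  have hs2 : vccSel G s(A', B') = vccTF A'.1 :=
                    vccSel_mk_left G A' B' (hM' ▸ hma') (hM' ▸ hnab' m hma')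
                  have he : vccTF A.1 = vccTF A'.1 := by rw [← hs1, ← hs2, hS]
                  exact Or.inl ⟨Subtype.ext (vccTF_inj he),
                    Subtype.ext (vccTF_inj (by rw [hcb, hcb', he]))⟩
                · have hs1 : vccSel G s(A, B) = vccTF A.1 :=
                    vccSel_mk_left G A B (hM ▸ hma) (hM ▸ hnab m hma)
                  have hs2 : vccSel G s(A', B') = vccTF B'.1 :=
                    vccSel_mk_right G A' B' (hM' ▸ hmb')
                      (hM' ▸ fun h => hnab' m h hmb')
                  have he : vccTF A.1 = vccTF B'.1 := by rw [← hs1, ← hs2, hS]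
                  exact Or.inr ⟨Subtype.ext (vccTF_inj he),
                    Subtype.ext (vccTF_inj (by rw [hcb, hca', he]))⟩
                · have hs1 : vccSel G s(A, B) = vccTF B.1 :=
                    vccSel_mk_right G A B (hM ▸ hmb) (hM ▸ fun h => hnab m h hmb)
                  have hs2 : vccSel G s(A', B') = vccTF A'.1 :=
                    vccSel_mk_left G A' B' (hM' ▸ hma') (hM' ▸ hnab' m hma')
                  have he : vccTF B.1 = vccTF A'.1 := by rw [← hs1, ← hs2, hS]
                  exact Or.inr ⟨Subtype.ext (vccTF_inj (by rw [hca, hcb', he])),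
                    Subtype.ext (vccTF_inj he)⟩
                · have hs1 : vccSel G s(A, B) = vccTF B.1 :=
                    vccSel_mk_right G A B (hM ▸ hmb) (hM ▸ fun h => hnab m h hmb)
                  have hs2 : vccSel G s(A', B') = vccTF B'.1 :=
                    vccSel_mk_right G A' B' (hM' ▸ hmb')
                      (hM' ▸ fun h => hnab' m h hmb')
                  have he : vccTF B.1 = vccTF B'.1 := by rw [← hs1, ← hs2, hS]
                  exact Or.inl ⟨Subtype.ext (vccTF_inj (by rw [hca, hca', he])),
                    Subtype.ext (vccTF_inj he)⟩
      _ ≤ (t.erase m).card := Finset.card_image_le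
      _ = 3 := by rw [Finset.card_erase_of_mem hmt, ht4]
  have hbound4 : P4.card ≤ 3 * 𝒬.card := by
    calc P4.card ≤ (𝒬.biUnion (fun t => P4.filter (fun z => vccU G z = t))).card :=
          Finset.card_le_card hsub4
      _ ≤ ∑ t ∈ 𝒬, (P4.filter (fun z => vccU G z = t)).card := Finset.card_biUnion_le
      _ ≤ ∑ _t ∈ 𝒬, 3 := Finset.sum_le_sum hfib4
      _ = 3 * 𝒬.card := by rw [Finset.sum_const, smul_eq_mul, mul_comm]
  omega
end

section
/- Let G = (V,E) be a finite simple graph with n vertices and m edges whose degeneracy is d. Then the transformed graph G_VCC has exactly m vertices, at most d·n vertices, and at most (3/2)·d(d−1)·(n + m) edges. -/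
open SimpleGraph

open Finset

lemma degenerate_degeneracy {V : Type*} [Fintype V] (G : SimpleGraph V) :
    G.Degenerate G.degeneracy := by
  have hne : {d | G.Degenerate d}.Nonempty := by
    refine ⟨Fintype.card V, fun S hS => ?_⟩
    obtain ⟨v, hv⟩ := hS
    refine ⟨v, hv, ?_⟩
    calc ({u ∈ S | G.Adj v u} : Set V).ncard ≤ (Set.univ : Set V).ncard :=
          Set.ncard_le_ncard (Set.subset_univ _) Set.finite_univ
      _ = Fintype.card V := by rw [Set.ncard_univ, Nat.card_eq_fintype_card]
  exact Nat.sInf_mem hne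


lemma exists_rank {V : Type*} [Fintype V] (G : SimpleGraph V) (d : ℕ)
    (hdg : G.Degenerate d) :
    ∃ r : V → ℕ, Function.Injective r ∧
      ∀ v, ({u | G.Adj v u ∧ r v < r u} : Set V).ncard ≤ d := by
  classical
  suffices h : ∀ s : Finset V, ∃ r : V → ℕ, Set.InjOn r ↑s ∧
      ∀ v ∈ s, ({u | u ∈ s ∧ G.Adj v u ∧ r v < r u} : Set V).ncard ≤ d by
    obtain ⟨r, hinj, hb⟩ := h Finset.univ
    refine ⟨r, fun a b hab => hinj (by simp) (by simp) hab, fun v => ?_⟩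
    have := hb v (mem_univ v)
    simpa using this
  intro s
  induction s using Finset.strongInduction with
  | _ s IH =>
    rcases s.eq_empty_or_nonempty with rfl | hne
    · exact ⟨fun _ => 0, by simp, by simp⟩
    · obtain ⟨v, hv, hvd⟩ := hdg ↑s (by exact_mod_cast hne)
      obtain ⟨r', hinj', hb'⟩ := IH (s.erase v) (Finset.erase_ssubset hv)
      refine ⟨fun u => if u = v then 0 else r' u + 1, ?_, ?_⟩
      · intro a ha b hb hab
        by_cases hav : a = v
        · by_cases hbv : b = v
          · exact hav.trans hbv.symm
          · exfalso; simp [hav, hbv] at hab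
        · by_cases hbv : b = v
          · exfalso; simp [hav, hbv] at hab
          · exact hinj' (Finset.mem_erase.2 ⟨hav, ha⟩) (Finset.mem_erase.2 ⟨hbv, hb⟩)
              (by simpa [hav, hbv] using hab)
      · intro w hw
        by_cases hwv : w = v
        · subst hwv
          refine le_trans (Set.ncard_le_ncard ?_ (Set.toFinite _)) hvd
          intro u hu; exact ⟨hu.1, hu.2.1⟩
        · refine le_trans (Set.ncard_le_ncard ?_ (Set.toFinite _))
            (hb' w (Finset.mem_erase.2 ⟨hwv, hw⟩))
        
          intro u hu
          obtain ⟨hus, hadj, hlt⟩ := hu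
          have huv : u ≠ v := by
            rintro rfl
            simp [hwv] at hlt
          refine ⟨Finset.mem_erase.2 ⟨huv, hus⟩, hadj, ?_⟩
          simpa [hwv, huv] using hlt


section Count
variable {V : Type*} [Fintype V] [LinearOrder V] (G : SimpleGraph V)

open Classical in
noncomputable def Fwd (v : V) : Finset V := univ.filter (fun u => G.Adj v u ∧ v < u)

noncomputable def emin (e : Sym2 V) : V :=
  Sym2.lift ⟨fun a b => min a b, fun _ _ => min_comm _ _⟩ e

noncomputable def emax (e : Sym2 V) : V :=
  Sym2.lift ⟨fun a b => max a b, fun _ _ => max_comm _ _⟩ e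

omit [Fintype V] in
@[simp] lemma emin_mk (a b : V) : emin s(a, b) = min a b := rfl
omit [Fintype V] in
@[simp] lemma emax_mk (a b : V) : emax s(a, b) = max a b := rfl

omit [Fintype V] in
lemma pair_min' (p q : V) (h : p < q) (hne : ({p, q} : Finset V).Nonempty) :
    ({p, q} : Finset V).min' hne = p := by
  have h1 := Finset.min'_mem {p, q} hne
  have h2 := Finset.min'_le {p, q} p (by simp)
  simp only [Finset.mem_insert, Finset.mem_singleton] at h1
  rcases h1 with h1 | h1
  · exact h1
  · exact absurd (h1 ▸ h2) (not_le.2 h)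

omit [Fintype V] in
lemma pair_max' (p q : V) (h : p < q) (hne : ({p, q} : Finset V).Nonempty) :
    ({p, q} : Finset V).max' hne = q := by
  have h1 := Finset.max'_mem {p, q} hne
  have h2 := Finset.le_max' {p, q} q (by simp)
  simp only [Finset.mem_insert, Finset.mem_singleton] at h1
  rcases h1 with h1 | h1
  · exact absurd (h1 ▸ h2) (not_le.2 h)
  · exact h1

/-- decode function -/
noncomputable def dec : (V ⊕ Sym2 V) × Finset V × Fin 3 → Option (Sym2 (Sym2 V))
  | (Sum.inl w, s, tag) =>
    if h : s.Nonempty then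
      let p := s.min' h
      let q := s.max' h
      let z := if tag = 0 then w else if tag = 1 then p else q
      let y₁ := if tag = 0 then p else w
      let y₂ := if tag = 2 then p else q
      some s(s(z, y₁), s(z, y₂))
    else none
  | (Sum.inr e, s, tag) =>
    if h : s.Nonempty then
      let w := emin e
      let x := emax e
      let p := s.min' h
      let q := s.max' h
      some (if tag = 0 then s(s(w, x), s(p, q)) else
            if tag = 1 then s(s(w, p), s(x, q)) else s(s(w, q), s(x, p)))
    else none

open Classical in
noncomputable def Tgt : Finset ((V ⊕ Sym2 V) × Finset V × Fin 3) :=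
  (univ.biUnion fun v => {(Sum.inl v : V ⊕ Sym2 V)} ×ˢ ((Fwd G v).powersetCard 2 ×ˢ univ)) ∪
  (G.edgeSet.toFinset.biUnion fun e => {Sum.inr e} ×ˢ ((Fwd G (emin e)).powersetCard 2 ×ˢ univ))

open Classical in
lemma mem_Tgt_inl {v : V} {s : Finset V} (tag : Fin 3)
    (hs : s ∈ (Fwd G v).powersetCard 2) : (Sum.inl v, s, tag) ∈ Tgt G := by
  apply Finset.mem_union_left
  rw [Finset.mem_biUnion]
  exact ⟨v, mem_univ v, Finset.mem_product.2 ⟨Finset.mem_singleton_self _,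
    Finset.mem_product.2 ⟨hs, Finset.mem_univ _⟩⟩⟩

open Classical in
lemma mem_Tgt_inr {e : Sym2 V} {s : Finset V} (tag : Fin 3) (he : e ∈ G.edgeSet)
    (hs : s ∈ (Fwd G (emin e)).powersetCard 2) : (Sum.inr e, s, tag) ∈ Tgt G := by
  apply Finset.mem_union_right
  rw [Finset.mem_biUnion]
  exact ⟨e, Set.mem_toFinset.2 he, Finset.mem_product.2 ⟨Finset.mem_singleton_self _,
    Finset.mem_product.2 ⟨hs, Finset.mem_univ _⟩⟩⟩

open Classical in
lemma Tgt_card (d : ℕ) (hf : ∀ v, (Fwd G v).card ≤ d) :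
    (Tgt G).card ≤ 3 * (d * (d - 1) / 2) * (Fintype.card V + G.edgeSet.toFinset.card) := by
  have hA : ∀ v : V, ((Fwd G v).powersetCard 2).card ≤ d * (d - 1) / 2 := by
    intro v
    rw [Finset.card_powersetCard, ← Nat.choose_two_right]
    exact Nat.choose_le_choose 2 (hf v)
  have h1 : (univ.biUnion fun v : V =>
      {(Sum.inl v : V ⊕ Sym2 V)} ×ˢ ((Fwd G v).powersetCard 2 ×ˢ (univ : Finset (Fin 3)))).card ≤
      Fintype.card V * (d * (d - 1) / 2 * 3) := by
    refine le_trans Finset.card_biUnion_le ?_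
    calc ∑ v : V, ({(Sum.inl v : V ⊕ Sym2 V)} ×ˢ ((Fwd G v).powersetCard 2 ×ˢ (univ : Finset (Fin 3)))).card
        ≤ ∑ _v : V, d * (d - 1) / 2 * 3 := by
          refine Finset.sum_le_sum fun v _ => ?_
          simp only [Finset.card_product, Finset.card_singleton, one_mul, Finset.card_univ,
            Fintype.card_fin]
          exact Nat.mul_le_mul_right 3 (hA v)
      _ = Fintype.card V * (d * (d - 1) / 2 * 3) := by simp [mul_comm]
  have h2 : (G.edgeSet.toFinset.biUnion fun e =>
      {(Sum.inr e : V ⊕ Sym2 V)} ×ˢ ((Fwd G (emin e)).powersetCard 2 ×ˢ (univ : Finset (Fin 3)))).card ≤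
      G.edgeSet.toFinset.card * (d * (d - 1) / 2 * 3) := by
    refine le_trans Finset.card_biUnion_le ?_
    calc ∑ e ∈ G.edgeSet.toFinset,
          ({(Sum.inr e : V ⊕ Sym2 V)} ×ˢ ((Fwd G (emin e)).powersetCard 2 ×ˢ (univ : Finset (Fin 3)))).card
        ≤ ∑ _e ∈ G.edgeSet.toFinset, d * (d - 1) / 2 * 3 := by
          refine Finset.sum_le_sum fun e _ => ?_
          simp only [Finset.card_product, Finset.card_singleton, one_mul, Finset.card_univ,
            Fintype.card_fin]
          exact Nat.mul_le_mul_right 3 (hA _)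
      _ = G.edgeSet.toFinset.card * (d * (d - 1) / 2 * 3) := by simp [mul_comm]
  unfold Tgt
  refine le_trans (Finset.card_union_le
    (α := (V ⊕ Sym2 V) × Finset V × Fin 3) _ _) ?_
  calc _ ≤ Fintype.card V * (d * (d - 1) / 2 * 3) +
        G.edgeSet.toFinset.card * (d * (d - 1) / 2 * 3) := Nat.add_le_add h1 h2
    _ = 3 * (d * (d - 1) / 2) * (Fintype.card V + G.edgeSet.toFinset.card) := by ring

end Count

section Helpers
variable {V : Type*} [Fintype V] [LinearOrder V] (G : SimpleGraph V)

omit [Fintype V] in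
lemma dec_inl (w p q : V) (hpq : p < q) (tag : Fin 3) :
    dec (Sum.inl w, ({p, q} : Finset V), tag) =
      some (if tag = 0 then s(s(w, p), s(w, q)) else
            if tag = 1 then s(s(p, w), s(p, q)) else s(s(q, w), s(q, p))) := by
  have hne : ({p, q} : Finset V).Nonempty := ⟨p, by simp⟩
  unfold dec
  dsimp only
  rw [dif_pos hne]
  rw [pair_min' p q hpq hne, pair_max' p q hpq hne]
  fin_cases tag <;> simp

omit [Fintype V] in
lemma dec_inr (a b p q : V) (hab : a < b) (hpq : p < q) (tag : Fin 3) :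
    dec (Sum.inr s(a, b), ({p, q} : Finset V), tag) =
      some (if tag = 0 then s(s(a, b), s(p, q)) else
            if tag = 1 then s(s(a, p), s(b, q)) else s(s(a, q), s(b, p))) := by
  have hne : ({p, q} : Finset V).Nonempty := ⟨p, by simp⟩
  unfold dec
  dsimp only
  rw [dif_pos hne]
  rw [pair_min' p q hpq hne, pair_max' p q hpq hne]
  have h1 : emin s(a, b) = a := by simp [min_eq_left hab.le]
  have h2 : emax s(a, b) = b := by simp [max_eq_right hab.le]
  rw [h1, h2]

lemma mem_pcard {w p q : V} (hwp : G.Adj w p) (hwq : G.Adj w q) (h1 : w < p) (h2 : w < q)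
    (hpq : p ≠ q) : ({p, q} : Finset V) ∈ (Fwd G w).powersetCard 2 := by
  rw [Finset.mem_powersetCard]
  constructor
  · intro x hx
    simp only [Finset.mem_insert, Finset.mem_singleton] at hx
    rcases hx with rfl | rfl <;> simp [Fwd, hwp, hwq, h1, h2]
  · rw [Finset.card_insert_of_notMem (by simp [hpq]), Finset.card_singleton]

lemma tri_aux (z x y : V) (hzx : G.Adj z x) (hzy : G.Adj z y) (hxy : G.Adj x y)
    (hlt : x < y) : ∃ t ∈ Tgt G, dec t = some s(s(z, x), s(z, y)) := by
  rcases lt_trichotomy z x with h1 | h1 | h1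
  · -- z < x < y
    refine ⟨(Sum.inl z, {x, y}, 0), mem_Tgt_inl G 0 (mem_pcard G hzx hzy h1 (h1.trans hlt) hxy.ne), ?_⟩
    rw [dec_inl z x y hlt 0]
    simp
  · exact absurd h1 hzx.ne
  · rcases lt_trichotomy z y with h2 | h2 | h2
    · -- x < z < y
      refine ⟨(Sum.inl x, {z, y}, 1), mem_Tgt_inl G 1
        (mem_pcard G hzx.symm hxy h1 hlt hzy.ne), ?_⟩
      rw [dec_inl x z y h2 1]
      simp
    · exact absurd h2 hzy.ne
    · -- x < y < z
      refine ⟨(Sum.inl x, {y, z}, 2), mem_Tgt_inl G 2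
        (mem_pcard G hxy hzx.symm hlt h1 h2.ne), ?_⟩
      rw [dec_inl x y z h2 2]
      simp

lemma tri_main (z x y : V) (hzx : G.Adj z x) (hzy : G.Adj z y) (hxy : G.Adj x y) :
    ∃ t ∈ Tgt G, dec t = some s(s(z, x), s(z, y)) := by
  rcases lt_or_gt_of_ne hxy.ne with h | h
  · exact tri_aux G z x y hzx hzy hxy h
  · obtain ⟨t, ht, hdec⟩ := tri_aux G z y x hzy hzx hxy.symm h
    exact ⟨t, ht, by rw [hdec, Sym2.eq_swap]⟩

lemma k4_aux (w t u v : V) (hwt : G.Adj w t) (hwu : G.Adj w u) (hwv : G.Adj w v)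
    (htu : G.Adj t u) (htv : G.Adj t v) (huv : G.Adj u v)
    (h1 : w < t) (h2 : w < u) (h3 : w < v) (h4 : u < v) :
    ∃ t' ∈ Tgt G, dec t' = some s(s(w, t), s(u, v)) := by
  rcases lt_trichotomy t u with h5 | h5 | h5
  · -- w < t < u < v : base edge s(w,t), others {u,v}, tag 0
    refine ⟨(Sum.inr s(w, t), {u, v}, 0), mem_Tgt_inr G 0 (G.mem_edgeSet.2 hwt) ?_, ?_⟩
    · have : emin s(w, t) = w := by simp [min_eq_left h1.le]
      rw [this]
      exact mem_pcard G hwu hwv h2 h3 huv.ne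
    · rw [dec_inr w t u v h1 h4 0]
      simp
  · exact absurd h5 htu.ne
  · -- u < t : base edge s(w,u), others {t,v}
    rcases lt_trichotomy t v with h6 | h6 | h6
    · -- t < v : tag 1 with p = t, q = v
      refine ⟨(Sum.inr s(w, u), {t, v}, 1), mem_Tgt_inr G 1 (G.mem_edgeSet.2 hwu) ?_, ?_⟩
      · have : emin s(w, u) = w := by simp [min_eq_left h2.le]
        rw [this]
        exact mem_pcard G hwt hwv h1 h3 htv.ne
      · rw [dec_inr w u t v h2 h6 1]
        simp
    · exact absurd h6 htv.ne
    · -- v < t : tag 2 with p = v, q = t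
      refine ⟨(Sum.inr s(w, u), {v, t}, 2), mem_Tgt_inr G 2 (G.mem_edgeSet.2 hwu) ?_, ?_⟩
      · have : emin s(w, u) = w := by simp [min_eq_left h2.le]
        rw [this]
        exact mem_pcard G hwv hwt h3 h1 h6.ne
      · rw [dec_inr w u v t h2 h6 2]
        simp

end Helpers

section Main
variable {V : Type*} [Fintype V] [LinearOrder V] (G : SimpleGraph V)

omit [Fintype V] [LinearOrder V] in
lemma edge_rep [LinearOrder V] (e : Sym2 V) (he : e ∈ G.edgeSet) :
    ∃ x y, x < y ∧ G.Adj x y ∧ e = s(x, y) := by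
  induction e with
  | _ a b =>
    have hadj : G.Adj a b := he
    rcases lt_or_gt_of_ne hadj.ne with h | h
    · exact ⟨a, b, h, hadj, rfl⟩
    · exact ⟨b, a, h, hadj.symm, Sym2.eq_swap⟩

lemma main_dec (a b : {e : Sym2 V // e ∈ G.edgeSet})
    (hab : (G.transGraph G.edgeSet).Adj a b) :
    ∃ t ∈ Tgt G, dec t = some s(a.1, b.1) := by
  obtain ⟨hne, hcl⟩ := hab
  have hne' : a.1 ≠ b.1 := fun h => hne (Subtype.ext h)
  have hcross : ∀ p q : V, (p ∈ a.1 ∨ p ∈ b.1) → (q ∈ a.1 ∨ q ∈ b.1) → p ≠ q → G.Adj p q := by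
    intro p q hp hq hpq
    exact hcl (by rcases hp with h | h; exacts [Or.inl h, Or.inr h])
      (by rcases hq with h | h; exacts [Or.inl h, Or.inr h]) hpq
  by_cases hsh : ∃ z, z ∈ a.1 ∧ z ∈ b.1
  · -- shared vertex: triangle case
    obtain ⟨z, hza, hzb⟩ := hsh
    obtain ⟨x, hax⟩ := Sym2.mem_iff_exists.1 hza
    obtain ⟨y, hby⟩ := Sym2.mem_iff_exists.1 hzb
    have hzx : G.Adj z x := G.mem_edgeSet.1 (hax ▸ a.2)
    have hzy : G.Adj z y := G.mem_edgeSet.1 (hby ▸ b.2)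
    have hxy_ne : x ≠ y := fun h => hne' (by rw [hax, hby, h])
    have hxy : G.Adj x y := hcross x y
      (Or.inl (by rw [hax]; exact Sym2.mem_mk_right z x))
      (Or.inr (by rw [hby]; exact Sym2.mem_mk_right z y)) hxy_ne
    obtain ⟨t, ht, hdec⟩ := tri_main G z x y hzx hzy hxy
    exact ⟨t, ht, by rw [hdec, hax, hby]⟩
  · -- disjoint: K4 case
    push_neg at hsh
    obtain ⟨x₁, x₂, hx12, hxadj, hxe⟩ := edge_rep G a.1 a.2
    obtain ⟨y₁, y₂, hy12, hyadj, hye⟩ := edge_rep G b.1 b.2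
    have hx₁a : x₁ ∈ a.1 := by rw [hxe]; exact Sym2.mem_mk_left x₁ x₂
    have hx₂a : x₂ ∈ a.1 := by rw [hxe]; exact Sym2.mem_mk_right x₁ x₂
    have hy₁b : y₁ ∈ b.1 := by rw [hye]; exact Sym2.mem_mk_left y₁ y₂
    have hy₂b : y₂ ∈ b.1 := by rw [hye]; exact Sym2.mem_mk_right y₁ y₂
    have h11 : G.Adj x₁ y₁ := hcross _ _ (Or.inl hx₁a) (Or.inr hy₁b)
      (fun h => hsh x₁ hx₁a (h ▸ hy₁b))
    have h12 : G.Adj x₁ y₂ := hcross _ _ (Or.inl hx₁a) (Or.inr hy₂b)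
      (fun h => hsh x₁ hx₁a (h ▸ hy₂b))
    have h21 : G.Adj x₂ y₁ := hcross _ _ (Or.inl hx₂a) (Or.inr hy₁b)
      (fun h => hsh x₂ hx₂a (h ▸ hy₁b))
    have h22 : G.Adj x₂ y₂ := hcross _ _ (Or.inl hx₂a) (Or.inr hy₂b)
      (fun h => hsh x₂ hx₂a (h ▸ hy₂b))
    rcases lt_or_gt_of_ne h11.ne with hc | hc
    · obtain ⟨t, ht, hdec⟩ := k4_aux G x₁ x₂ y₁ y₂ hxadj h11 h12 h21 h22 hyadj
        hx12 hc (hc.trans hy12) hy12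
      exact ⟨t, ht, by rw [hdec, hxe, hye]⟩
    · obtain ⟨t, ht, hdec⟩ := k4_aux G y₁ y₂ x₁ x₂ hyadj h11.symm h21.symm h12.symm h22.symm
        hxadj hy12 hc (hc.trans hx12) hx12
      exact ⟨t, ht, by rw [hdec, hxe, hye, Sym2.eq_swap]⟩

end Main

section Final
variable {V : Type*} [Fintype V] [LinearOrder V] (G : SimpleGraph V)

lemma edge_count' (d : ℕ) (hf : ∀ v, (Fwd G v).card ≤ d) :
    G.edgeSet.ncard ≤ d * Fintype.card V := by
  classical
  have hkey : ∀ e : Sym2 V, s(emin e, emax e) = e := by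
    intro e
    induction e with
    | _ a b =>
      rcases le_total a b with h | h
      · simp [min_eq_left h, max_eq_right h]
      · simp only [emin_mk, emax_mk, min_eq_right h, max_eq_left h]
        exact Sym2.eq_swap
  have hmaps : ∀ e ∈ G.edgeSet, (emin e, emax e) ∈
      (↑(univ.biUnion (fun v => {v} ×ˢ Fwd G v)) : Set (V × V)) := by
    intro e he
    induction e with
    | _ a b =>
      have hadj : G.Adj a b := he
      rw [Finset.coe_biUnion]
      rcases lt_or_gt_of_ne hadj.ne with h | h
      · simp only [emin_mk, emax_mk, min_eq_left h.le, max_eq_right h.le]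
        exact Set.mem_iUnion₂.2 ⟨a, by simp [Fwd, hadj, h]⟩
      · simp only [emin_mk, emax_mk, min_eq_right h.le, max_eq_left h.le]
        exact Set.mem_iUnion₂.2 ⟨b, by simp [Fwd, hadj.symm, h]⟩
  have hinj : Set.InjOn (fun e => (emin e, emax e)) G.edgeSet := by
    intro e₁ _ e₂ _ hee
    simp only [Prod.mk.injEq] at hee
    rw [← hkey e₁, ← hkey e₂, hee.1, hee.2]
  calc G.edgeSet.ncard ≤ (↑(univ.biUnion (fun v => {v} ×ˢ Fwd G v)) : Set (V × V)).ncard :=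
        Set.ncard_le_ncard_of_injOn _ hmaps hinj (Finset.finite_toSet _)
    _ = (univ.biUnion (fun v => {v} ×ˢ Fwd G v)).card := Set.ncard_coe_finset _
    _ ≤ ∑ v : V, ({v} ×ˢ Fwd G v).card := Finset.card_biUnion_le
    _ ≤ ∑ _v : V, d := Finset.sum_le_sum (fun v _ => by simpa using hf v)
    _ = d * Fintype.card V := by simp [mul_comm]

open Classical in
lemma trans_count (d : ℕ) (hf : ∀ v, (Fwd G v).card ≤ d) :
    (G.transGraph G.edgeSet).edgeSet.ncard ≤
      3 * (d * (d - 1) / 2) * (Fintype.card V + G.edgeSet.ncard) := by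
  rcases isEmpty_or_nonempty V with hV | hV
  · haveI : IsEmpty (Sym2 {e : Sym2 V // e ∈ G.edgeSet}) := by infer_instance
    rw [Set.eq_empty_of_isEmpty (G.transGraph G.edgeSet).edgeSet]
    simp
  · have key : ∀ ε : Sym2 {e : Sym2 V // e ∈ G.edgeSet},
        ε ∈ (G.transGraph G.edgeSet).edgeSet →
        ∃ t ∈ Tgt G, dec t = some (Sym2.map Subtype.val ε) := by
      intro ε
      induction ε with
      | _ a b =>
        intro h
        have hadj : (G.transGraph G.edgeSet).Adj a b := h
        obtain ⟨t, ht, hd⟩ := main_dec G a b hadj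
        exact ⟨t, ht, by rw [Sym2.map_pair_eq]; exact hd⟩
    have hex : ∀ ε : Sym2 {e : Sym2 V // e ∈ G.edgeSet},
        ∃ t : (V ⊕ Sym2 V) × Finset V × Fin 3,
          ε ∈ (G.transGraph G.edgeSet).edgeSet →
          t ∈ Tgt G ∧ dec t = some (Sym2.map Subtype.val ε) := by
      intro ε
      by_cases h : ε ∈ (G.transGraph G.edgeSet).edgeSet
      · obtain ⟨t, ht, hd⟩ := key ε h
        exact ⟨t, fun _ => ⟨ht, hd⟩⟩
      · exact ⟨(Sum.inl (Classical.arbitrary V), ∅, 0), fun hc => absurd hc h⟩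
    set f := fun ε => (hex ε).choose with hfdef
    have hmaps : ∀ ε ∈ (G.transGraph G.edgeSet).edgeSet, f ε ∈ (↑(Tgt G) : Set _) := by
      intro ε hε
      exact ((hex ε).choose_spec hε).1
    have hinj : Set.InjOn f (G.transGraph G.edgeSet).edgeSet := by
      intro ε₁ h₁ ε₂ h₂ hee
      have s₁ := ((hex ε₁).choose_spec h₁).2
      have s₂ := ((hex ε₂).choose_spec h₂).2
      rw [hfdef] at hee
      simp only at hee
      rw [hee, s₂] at s₁
      exact Sym2.map.injective Subtype.val_injective (Option.some_injective _ s₁).symm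
    calc (G.transGraph G.edgeSet).edgeSet.ncard ≤ (↑(Tgt G) : Set _).ncard :=
          Set.ncard_le_ncard_of_injOn f hmaps hinj (Finset.finite_toSet _)
      _ = (Tgt G).card := Set.ncard_coe_finset _
      _ ≤ 3 * (d * (d - 1) / 2) * (Fintype.card V + G.edgeSet.toFinset.card) := Tgt_card G d hf
      _ = 3 * (d * (d - 1) / 2) * (Fintype.card V + G.edgeSet.ncard) := by
          rw [Set.ncard_eq_toFinset_card']

end Final

/-- If `G` has `n` vertices, `m` edges, and degeneracy `d`, then the
transformed graph `G_VCC` has exactly `m` vertices, at most `d * n` vertices, and at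
most `(3/2) * d * (d-1) * (n + m)` edges. -/
theorem stmt_7 {V : Type*} [Fintype V] (G : SimpleGraph V) (n m d : ℕ)
    (hn : n = Fintype.card V) (hm : m = G.edgeSet.ncard)
    (hd : G.degeneracy = d) :
    Nat.card {e : Sym2 V // e ∈ G.edgeSet} = m ∧
    Nat.card {e : Sym2 V // e ∈ G.edgeSet} ≤ d * n ∧
    (G.transGraph G.edgeSet).edgeSet.ncard ≤ 3 * (d * (d - 1) / 2) * (n + m) := by
  classical
  have hdg : G.Degenerate d := hd ▸ degenerate_degeneracy G
  obtain ⟨r, hr, hFwd⟩ := exists_rank G d hdg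
  letI : LinearOrder V := LinearOrder.lift' r hr
  have hlt : ∀ a b : V, a < b ↔ r a < r b := by
    intro a b
    constructor
    · intro h
      exact lt_of_le_of_ne (le_of_lt h) (fun he => (ne_of_lt h) (hr he))
    · intro h
      exact lt_of_le_of_ne (show r a ≤ r b from le_of_lt h)
        (fun he => (ne_of_lt h) (congrArg r he))
  have hf : ∀ v, (Fwd G v).card ≤ d := by
    intro v
    have hset : (↑(Fwd G v) : Set V) = {u | G.Adj v u ∧ r v < r u} := by
      ext u
      simp [Fwd, hlt]
    calc (Fwd G v).card = (↑(Fwd G v) : Set V).ncard := (Set.ncard_coe_finset _).symm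
      _ = ({u | G.Adj v u ∧ r v < r u} : Set V).ncard := by rw [hset]
      _ ≤ d := hFwd v
  refine ⟨?_, ?_, ?_⟩
  · rw [Nat.card_coe_set_eq, hm]
  · rw [Nat.card_coe_set_eq, hn]
    exact hm ▸ edge_count' G d hf
  · rw [hn, hm]
    exact trans_count G d hf
end

section
/- Let G = (V,E) be a finite simple graph, let E' ⊆ E, and let G'_VCC be the partial transformed graph of G with respect to E'. If C' is a clique in G'_VCC, then the set C = ⋃_{v_{xy} ∈ C'} {x,y} of all endpoints of the edges corresponding to vertices of C' is a clique in G, and C contains (as subsets) at least |C'| edges of E', namely every edge of E' corresponding to a vertex of C'. -/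
open SimpleGraph

/-- If `C'` is a clique in the partial transformed graph `G'_VCC`, then the
set `C` of all endpoints of the edges corresponding to vertices of `C'` is a clique in
`G`, every edge of `E'` corresponding to a vertex of `C'` is contained in `C`, and
`C` contains at least `|C'|` edges of `E'`. -/
theorem stmt_8 {V : Type*} [Fintype V] (G : SimpleGraph V) (E' : Set (Sym2 V))
    (hE' : E' ⊆ G.edgeSet)
    (C' : Set {e : Sym2 V // e ∈ E'}) (h : (G.transGraph E').IsClique C')
    (C : Set V) (hC : C = ⋃ e ∈ C', {x | x ∈ e.1}) :
    G.IsClique C ∧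
    (∀ e ∈ C', ∀ x ∈ e.1, x ∈ C) ∧
    C'.ncard ≤ {e ∈ E' | ∀ x ∈ e, x ∈ C}.ncard := by
  subst hC
  have hmem : ∀ e ∈ C', ∀ x ∈ e.1, x ∈ ⋃ e ∈ C', {x | x ∈ e.1} := by
    intro e he x hx
    exact Set.mem_biUnion he hx
  refine ⟨?_, hmem, ?_⟩
  · intro x hx y hy hxy
    simp only [Set.mem_iUnion] at hx hy
    obtain ⟨e, he, hxe⟩ := hx
    obtain ⟨f, hf, hyf⟩ := hy
    by_cases hef : e = f
    · subst hef
      have this := hE' e.2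
      have hz : (e.1 : Sym2 V) = s(x, y) := (Sym2.mem_and_mem_iff hxy).1 ⟨hxe, hyf⟩
      rw [hz, SimpleGraph.mem_edgeSet] at this
      exact this
    · have hadj := h he hf (fun hh => hef (hh))
      exact hadj.2 (Set.mem_union_left _ hxe) (Set.mem_union_right _ hyf) hxy
  · have hinj : Set.InjOn (fun e : {e : Sym2 V // e ∈ E'} => e.1) C' :=
      fun a _ b _ hab => Subtype.ext hab
    have himg : (fun e : {e : Sym2 V // e ∈ E'} => e.1) '' C' ⊆
        {e ∈ E' | ∀ x ∈ e, x ∈ ⋃ e ∈ C', {x | x ∈ e.1}} := by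
      rintro _ ⟨e, he, rfl⟩
      exact ⟨e.2, hmem e he⟩
    calc C'.ncard = ((fun e : {e : Sym2 V // e ∈ E'} => e.1) '' C').ncard :=
          (Set.ncard_image_of_injOn hinj).symm
      _ ≤ _ := Set.ncard_le_ncard himg (Set.toFinite _)
end

section
/- Let G = (V,E) be a finite simple graph, let E' ⊆ E, and let G'_VCC be the partial transformed graph of G with respect to E'. If C' is a vertex clique cover of G'_VCC, then C = { ⋃_{v_{xy} ∈ C''} {x,y} : C'' ∈ C' } is a set of cliques of G of cardinality at most |C'| such that every edge of E' is contained in some clique of C. -/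
open SimpleGraph

/-- If `𝒞'` is a vertex clique cover of the partial transformed graph
`G'_VCC`, then `𝒞 = { ⋃_{v_xy ∈ C''} {x,y} : C'' ∈ 𝒞' }` is a set of cliques of `G`
of cardinality at most `|𝒞'|` such that every edge of `E'` is contained in some clique
of `𝒞`. -/
theorem stmt_9 {V : Type*} [Fintype V] (G : SimpleGraph V) (E' : Set (Sym2 V))
    (hE' : E' ⊆ G.edgeSet)
    (𝒞' : Set (Set {e : Sym2 V // e ∈ E'}))
    (hclique : ∀ C'' ∈ 𝒞', (G.transGraph E').IsClique C'')
    (hcover : ∀ e : {e : Sym2 V // e ∈ E'}, ∃ C'' ∈ 𝒞', e ∈ C'')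
    (𝒞 : Set (Set V))
    (h𝒞 : 𝒞 = (fun C'' : Set {e : Sym2 V // e ∈ E'} => ⋃ e ∈ C'', {x | x ∈ e.1}) '' 𝒞') :
    𝒞.ncard ≤ 𝒞'.ncard ∧
    (∀ C ∈ 𝒞, G.IsClique C) ∧
    (∀ e ∈ E', ∃ C ∈ 𝒞, ∀ x ∈ e, x ∈ C) := by
  classical
  have hedge : ∀ e ∈ E', ∀ x ∈ e, ∀ y ∈ e, x ≠ y → G.Adj x y := by
    intro e he
    have hGe := hE' he
    induction e with
    | h a b =>
      intro x hx y hy hxy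
      rw [Sym2.mem_iff] at hx hy
      rw [SimpleGraph.mem_edgeSet] at hGe
      rcases hx with rfl | rfl <;> rcases hy with rfl | rfl <;>
        first | exact absurd rfl hxy | exact hGe | exact hGe.symm
  refine ⟨?_, ?_, ?_⟩
  · rw [h𝒞]
    exact Set.ncard_image_le (Set.toFinite _)
  · intro C hC
    rw [h𝒞] at hC
    obtain ⟨C'', hC'', rfl⟩ := hC
    intro x hx y hy hxy
    simp only [Set.mem_iUnion] at hx hy
    obtain ⟨e1, he1, hxe1⟩ := hx
    obtain ⟨e2, he2, hye2⟩ := hy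
    by_cases h12 : e1 = e2
    · subst h12
      exact hedge e1.1 e1.2 x hxe1 y hye2 hxy
    · have hadj := hclique C'' hC'' he1 he2 h12
      exact hadj.2 (Set.mem_union_left _ hxe1) (Set.mem_union_right _ hye2) hxy
  · intro e he
    obtain ⟨C'', hC'', heC⟩ := hcover ⟨e, he⟩
    refine ⟨⋃ e' ∈ C'', {x | x ∈ e'.1}, ?_, ?_⟩
    · rw [h𝒞]; exact ⟨C'', hC'', rfl⟩
    · intro x hx
      simp only [Set.mem_iUnion]
      exact ⟨⟨e, he⟩, heC, hx⟩
end

section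
/- Let G = (V,E) be a finite simple graph and let E' ⊆ E. The minimum cardinality θ_E(G,E') of a set of cliques of G covering every edge of E' equals the minimum cardinality θ(G'_VCC) of a vertex clique cover of the partial transformed graph G'_VCC of G with respect to E'. -/
open SimpleGraph

lemma edge_endpoints_clique {V : Type*} (G : SimpleGraph V) {e : Sym2 V}
    (he : e ∈ G.edgeSet) : G.IsClique {x | x ∈ e} := by
  induction e using Sym2.ind with
  | _ a b =>
    intro x hx y hy hxy
    simp only [Set.mem_setOf_eq, Sym2.mem_iff] at hx hy
    rw [SimpleGraph.mem_edgeSet] at he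
    rcases hx with rfl | rfl <;> rcases hy with rfl | rfl
    · exact absurd rfl hxy
    · exact he
    · exact he.symm
    · exact absurd rfl hxy

/-- The minimum cardinality of a set of cliques of `G` covering every edge of
`E'` equals the minimum cardinality of a vertex clique cover of the partial transformed
graph `G'_VCC` of `G` with respect to `E'`. -/
theorem stmt_10 {V : Type*} [Fintype V] (G : SimpleGraph V) (E' : Set (Sym2 V))
    (hE' : E' ⊆ G.edgeSet) :
    G.eccNumberOn E' = (G.transGraph E').vccNumber := by
  have hvccne : ∃ n, n ∈ {n | ∃ 𝒞 : Set (Set {e : Sym2 V // e ∈ E'}), 𝒞.Finite ∧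
      𝒞.ncard = n ∧ (∀ C ∈ 𝒞, (G.transGraph E').IsClique C) ∧
      ∀ w : {e : Sym2 V // e ∈ E'}, ∃ C ∈ 𝒞, w ∈ C} := by
    refine ⟨_, (Set.range fun w => ({w} : Set {e : Sym2 V // e ∈ E'})), Set.toFinite _,
      rfl, ?_, ?_⟩
    · rintro C ⟨w, rfl⟩
      exact Set.pairwise_singleton _ _
    · exact fun w => ⟨{w}, ⟨w, rfl⟩, rfl⟩
  have heccne : ∃ n, n ∈ {n | ∃ 𝒞 : Set (Set V), 𝒞.Finite ∧ 𝒞.ncard = n ∧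
      (∀ C ∈ 𝒞, G.IsClique C) ∧ ∀ e ∈ E', ∃ C ∈ 𝒞, ∀ x ∈ e, x ∈ C} := by
    refine ⟨_, (fun e => {x | x ∈ e}) '' E', Set.toFinite _, rfl, ?_, ?_⟩
    · rintro C ⟨e, he, rfl⟩
      exact edge_endpoints_clique G (hE' he)
    · exact fun e he => ⟨{x | x ∈ e}, ⟨e, he, rfl⟩, fun x hx => hx⟩
  apply le_antisymm
  · -- ecc ≤ vcc
    obtain ⟨𝒟, h𝒟fin, h𝒟card, h𝒟cl, h𝒟cov⟩ := Nat.sInf_mem hvccne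
    set f : Set {e : Sym2 V // e ∈ E'} → Set V :=
      fun D => {x : V | ∃ w ∈ D, x ∈ w.1} with hf
    have hmem : (f '' 𝒟).ncard ∈ {n | ∃ 𝒞 : Set (Set V), 𝒞.Finite ∧ 𝒞.ncard = n ∧
        (∀ C ∈ 𝒞, G.IsClique C) ∧ ∀ e ∈ E', ∃ C ∈ 𝒞, ∀ x ∈ e, x ∈ C} := by
      refine ⟨f '' 𝒟, h𝒟fin.image f, rfl, ?_, ?_⟩
      · rintro C ⟨D, hD, rfl⟩
        intro x hx y hy hxy
        obtain ⟨w₁, hw₁, hxw⟩ := hx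
        obtain ⟨w₂, hw₂, hyw⟩ := hy
        by_cases hww : w₁ = w₂
        · subst hww
          have := (Sym2.mem_and_mem_iff hxy).mp ⟨hxw, hyw⟩
          have he : w₁.1 ∈ G.edgeSet := hE' w₁.2
          rw [this, SimpleGraph.mem_edgeSet] at he
          exact he
        · have hadj := h𝒟cl D hD hw₁ hw₂ hww
          exact hadj.2 (Or.inl hxw) (Or.inr hyw) hxy
      · intro e he
        obtain ⟨C, hC, hwC⟩ := h𝒟cov ⟨e, he⟩
        exact ⟨f C, ⟨C, hC, rfl⟩, fun x hx => ⟨⟨e, he⟩, hwC, hx⟩⟩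
    calc G.eccNumberOn E' ≤ (f '' 𝒟).ncard := Nat.sInf_le hmem
      _ ≤ 𝒟.ncard := Set.ncard_image_le h𝒟fin
      _ = (G.transGraph E').vccNumber := h𝒟card
  · -- vcc ≤ ecc
    obtain ⟨𝒞, h𝒞fin, h𝒞card, h𝒞cl, h𝒞cov⟩ := Nat.sInf_mem heccne
    set g : Set V → Set {e : Sym2 V // e ∈ E'} :=
      fun C => {w | ∀ x ∈ w.1, x ∈ C} with hg
    have hmem : (g '' 𝒞).ncard ∈ {n | ∃ 𝒟 : Set (Set {e : Sym2 V // e ∈ E'}),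
        𝒟.Finite ∧ 𝒟.ncard = n ∧ (∀ D ∈ 𝒟, (G.transGraph E').IsClique D) ∧
        ∀ w : {e : Sym2 V // e ∈ E'}, ∃ D ∈ 𝒟, w ∈ D} := by
      refine ⟨g '' 𝒞, h𝒞fin.image g, rfl, ?_, ?_⟩
      · rintro D ⟨C, hC, rfl⟩
        intro a ha b hb hab
        refine ⟨hab, ?_⟩
        have hsub : ({x | x ∈ a.1} ∪ {x | x ∈ b.1} : Set V) ⊆ C := by
          rintro x (hx | hx)
          · exact ha x hx
          · exact hb x hx
        exact (h𝒞cl C hC).subset hsub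
      · intro w
        obtain ⟨C, hC, hwC⟩ := h𝒞cov w.1 w.2
        exact ⟨g C, ⟨C, hC, rfl⟩, hwC⟩
    calc (G.transGraph E').vccNumber ≤ (g '' 𝒞).ncard := Nat.sInf_le hmem
      _ ≤ 𝒞.ncard := Set.ncard_image_le h𝒞fin
      _ = G.eccNumberOn E' := h𝒞card
end

section
/- Let G = (V,E) be a finite simple graph, let E' ⊆ E, and let {u,v} ∈ E' be an edge such that the common neighborhood N_{u,v} = N(u) ∩ N(v) is a clique in G (equivalently, {u,v} is contained in exactly one maximal clique of G). Let C = N_{u,v} ∪ {u,v}. Then C is a clique of G, and there exists a set of cliques of G of minimum cardinality θ_E(G,E') covering every edge of E' that contains C as a member. -/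
open SimpleGraph

/-- If `{u,v} ∈ E'` is an edge whose common neighborhood
`N(u) ∩ N(v)` is a clique in `G`, then `C = (N(u) ∩ N(v)) ∪ {u,v}` is a clique of
`G` and there is a minimum-cardinality set of cliques of `G` covering every edge of
`E'` that contains `C` as a member. -/
theorem stmt_12 {V : Type*} [Fintype V] (G : SimpleGraph V) (E' : Set (Sym2 V))
    (hE' : E' ⊆ G.edgeSet) (u v : V) (huv : G.Adj u v) (he : s(u, v) ∈ E')
    (hN : G.IsClique (G.neighborSet u ∩ G.neighborSet v))
    (C : Set V) (hC : C = (G.neighborSet u ∩ G.neighborSet v) ∪ {u, v}) :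
    G.IsClique C ∧
    ∃ 𝒞 : Set (Set V), 𝒞.Finite ∧ (∀ D ∈ 𝒞, G.IsClique D) ∧
      (∀ e ∈ E', ∃ D ∈ 𝒞, ∀ x ∈ e, x ∈ D) ∧
      𝒞.ncard = G.eccNumberOn E' ∧ C ∈ 𝒞 := by
  subst hC
  set C : Set V := (G.neighborSet u ∩ G.neighborSet v) ∪ {u, v} with hCdef
  have hcliqueC : G.IsClique C := by
    intro x hx y hy hxy
    simp only [hCdef, Set.mem_union, Set.mem_inter_iff, SimpleGraph.mem_neighborSet,
      Set.mem_insert_iff, Set.mem_singleton_iff] at hx hy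
    rcases hx with hx | hx | hx
    · rcases hy with hy | hy | hy
      · exact hN hx hy hxy
      · subst hy; exact hx.1.symm
      · subst hy; exact hx.2.symm
    · subst hx
      rcases hy with hy | hy | hy
      · exact hy.1
      · exact absurd hy.symm hxy
      · subst hy; exact huv
    · subst hx
      rcases hy with hy | hy | hy
      · exact hy.2
      · subst hy; exact huv.symm
      · exact absurd hy.symm hxy
  refine ⟨hcliqueC, ?_⟩
  -- The set of achievable cover sizes is nonempty
  set S : Set ℕ := {n | ∃ 𝒞 : Set (Set V), 𝒞.Finite ∧ 𝒞.ncard = n ∧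
    (∀ C ∈ 𝒞, G.IsClique C) ∧ ∀ e ∈ E', ∃ C ∈ 𝒞, ∀ x ∈ e, x ∈ C} with hSdef
  have hSne : S.Nonempty := by
    refine ⟨((fun e : Sym2 V => {x | x ∈ e}) '' E').ncard,
      (fun e : Sym2 V => {x | x ∈ e}) '' E', (E'.toFinite).image _, rfl, ?_, ?_⟩
    · rintro D ⟨e, heE, rfl⟩
      have := hE' heE
      induction e with
      | h a b =>
        rw [SimpleGraph.mem_edgeSet] at this
        intro x hx y hy hxy
        simp only [Set.mem_setOf_eq, Sym2.mem_iff] at hx hy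
        rcases hx with rfl | rfl <;> rcases hy with rfl | rfl
        · exact absurd rfl hxy
        · exact this
        · exact this.symm
        · exact absurd rfl hxy
    · intro e heE
      exact ⟨{x | x ∈ e}, ⟨e, heE, rfl⟩, fun x hx => hx⟩
  have hmem : G.eccNumberOn E' ∈ S := by
    have := Nat.sInf_mem hSne
    simpa [SimpleGraph.eccNumberOn, hSdef] using this
  obtain ⟨𝒞₀, h𝒞fin, h𝒞card, h𝒞clique, h𝒞cover⟩ := hmem
  obtain ⟨D, hD𝒞, hDcov⟩ := h𝒞cover (s(u,v)) he
  have hu : u ∈ D := hDcov u (Sym2.mem_mk_left u v)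
  have hv : v ∈ D := hDcov v (Sym2.mem_mk_right u v)
  have hDC : D ⊆ C := by
    intro w hw
    by_cases hwu : w = u
    · subst hwu; exact Or.inr (Or.inl rfl)
    by_cases hwv : w = v
    · subst hwv; exact Or.inr (Or.inr rfl)
    · refine Or.inl ⟨?_, ?_⟩
      · exact (h𝒞clique D hD𝒞 hw hu hwu).symm
      · exact (h𝒞clique D hD𝒞 hw hv hwv).symm
  refine ⟨insert C (𝒞₀ \ {D}), ?_, ?_, ?_, ?_, Set.mem_insert _ _⟩
  · exact (h𝒞fin.diff).insert _
  · rintro D' hD'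
    rcases hD' with rfl | ⟨hD', -⟩
    · exact hcliqueC
    · exact h𝒞clique _ hD'
  · intro e heE
    obtain ⟨D', hD'𝒞, hD'cov⟩ := h𝒞cover e heE
    by_cases hDD : D' = D
    · subst hDD
      exact ⟨C, Set.mem_insert _ _, fun x hx => hDC (hD'cov x hx)⟩
    · exact ⟨D', Set.mem_insert_of_mem _ ⟨hD'𝒞, hDD⟩, hD'cov⟩
  · have hpos : 1 ≤ 𝒞₀.ncard := Set.ncard_pos h𝒞fin |>.mpr ⟨D, hD𝒞⟩
    have hle : (insert C (𝒞₀ \ {D})).ncard ≤ G.eccNumberOn E' := by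
      calc (insert C (𝒞₀ \ {D})).ncard ≤ (𝒞₀ \ {D}).ncard + 1 := Set.ncard_insert_le _ _
        _ = 𝒞₀.ncard - 1 + 1 := by rw [Set.ncard_diff_singleton_of_mem hD𝒞]
        _ = 𝒞₀.ncard := Nat.succ_pred_eq_of_pos hpos
        _ = G.eccNumberOn E' := h𝒞card
    have hge : G.eccNumberOn E' ≤ (insert C (𝒞₀ \ {D})).ncard := by
      apply Nat.sInf_le
      refine ⟨insert C (𝒞₀ \ {D}), (h𝒞fin.diff).insert _, rfl, ?_, ?_⟩
      · rintro D' (rfl | ⟨hD', -⟩)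
        · exact hcliqueC
        · exact h𝒞clique _ hD'
      · intro e heE
        obtain ⟨D', hD'𝒞, hD'cov⟩ := h𝒞cover e heE
        by_cases hDD : D' = D
        · subst hDD
          exact ⟨C, Set.mem_insert _ _, fun x hx => hDC (hD'cov x hx)⟩
        · exact ⟨D', Set.mem_insert_of_mem _ ⟨hD'𝒞, hDD⟩, hD'cov⟩
    exact le_antisymm hle hge
end

section
/- Let G = (V,E) be a finite simple graph, let E' ⊆ E, let G'_VCC be the partial transformed graph of G with respect to E', and let {u,w} ∈ E'. If the common neighborhood N_{u,w} = N(u) ∩ N(w) is a clique in G, then the vertex v_{uw} of G'_VCC is simplicial in G'_VCC, i.e., the closed neighborhood of v_{uw} in G'_VCC is a clique of G'_VCC. -/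
open SimpleGraph

/-- If `{u,w} ∈ E'` and the common neighborhood `N(u) ∩ N(w)` is a clique
in `G`, then the vertex `v_uw` of the partial transformed graph `G'_VCC` is simplicial
in `G'_VCC`, i.e., its closed neighborhood in `G'_VCC` is a clique of `G'_VCC`. -/
theorem stmt_14 {V : Type*} [Fintype V] (G : SimpleGraph V) (E' : Set (Sym2 V))
    (hE' : E' ⊆ G.edgeSet) (u w : V) (he : s(u, w) ∈ E')
    (hN : G.IsClique (G.neighborSet u ∩ G.neighborSet w)) :
    (G.transGraph E').IsClique
      (insert (⟨s(u, w), he⟩ : {e : Sym2 V // e ∈ E'})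
        ((G.transGraph E').neighborSet ⟨s(u, w), he⟩)) := by
  have huw : G.Adj u w := (G.mem_edgeSet).mp (hE' he)
  set S : Set V := insert u (insert w (G.neighborSet u ∩ G.neighborSet w)) with hS
  have hSclique : G.IsClique S := by
    intro x hx y hy hxy
    simp only [hS, Set.mem_insert_iff, Set.mem_inter_iff, mem_neighborSet] at hx hy
    rcases hx with rfl | rfl | ⟨hxu, hxw⟩ <;>
      rcases hy with rfl | rfl | h
    · exact absurd rfl hxy
    · exact huw
    · exact h.1
    · exact huw.symm
    · exact absurd rfl hxy
    · exact h.2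
    · exact hxu.symm
    · exact hxw.symm
    · exact hN ⟨hxu, hxw⟩ ⟨h.1, h.2⟩ hxy
  have hsub : ∀ a : {e : Sym2 V // e ∈ E'},
      a ∈ insert (⟨s(u, w), he⟩ : {e : Sym2 V // e ∈ E'})
        ((G.transGraph E').neighborSet ⟨s(u, w), he⟩) → {x | x ∈ a.1} ⊆ S := by
    intro a ha z hz
    rcases ha with rfl | ha
    · simp only [Set.mem_setOf_eq, Sym2.mem_iff] at hz
      rcases hz with rfl | rfl
      · exact Set.mem_insert _ _
      · exact Set.mem_insert_of_mem _ (Set.mem_insert _ _)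
    · have hadj : (G.transGraph E').Adj ⟨s(u, w), he⟩ a := ha
      obtain ⟨hne, hcl⟩ := hadj
      by_cases hzu : z = u
      · exact hzu ▸ Set.mem_insert _ _
      by_cases hzw : z = w
      · exact hzw ▸ Set.mem_insert_of_mem _ (Set.mem_insert _ _)
      have hzT : z ∈ {x | x ∈ (s(u, w) : Sym2 V)} ∪ {x | x ∈ a.1} :=
        Set.mem_union_right _ hz
      have huT : u ∈ {x | x ∈ (s(u, w) : Sym2 V)} ∪ {x | x ∈ a.1} :=
        Set.mem_union_left _ (by simp)
      have hwT : w ∈ {x | x ∈ (s(u, w) : Sym2 V)} ∪ {x | x ∈ a.1} :=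
        Set.mem_union_left _ (by simp)
      have h1 : G.Adj u z := hcl huT hzT (fun h => hzu h.symm)
      have h2 : G.Adj w z := hcl hwT hzT (fun h => hzw h.symm)
      exact Set.mem_insert_of_mem _ (Set.mem_insert_of_mem _ ⟨h1, h2⟩)
  intro a ha b hb hab
  exact ⟨hab, hSclique.subset (Set.union_subset (hsub a ha) (hsub b hb))⟩
end

section
/- Let G = (V,E) be a finite simple graph and let (H, I) be a head and crown of G: I is a nonempty independent set, H = N(I), H ∩ I = ∅, and there exists a matching in G between H and I of size |H|. Then θ(G) = |I| + θ(G[V ∖ (H ∪ I)]). -/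
open SimpleGraph

lemma vcc_le {W : Type*} (G : SimpleGraph W) {𝒞 : Set (Set W)} (h1 : 𝒞.Finite)
    (h2 : ∀ C ∈ 𝒞, G.IsClique C) (h3 : ∀ w : W, ∃ C ∈ 𝒞, w ∈ C) :
    G.vccNumber ≤ 𝒞.ncard :=
  Nat.sInf_le ⟨𝒞, h1, rfl, h2, h3⟩

lemma vcc_mem {W : Type*} [Fintype W] (G : SimpleGraph W) :
    ∃ 𝒞 : Set (Set W), 𝒞.Finite ∧ 𝒞.ncard = G.vccNumber ∧
      (∀ C ∈ 𝒞, G.IsClique C) ∧ ∀ w : W, ∃ C ∈ 𝒞, w ∈ C := by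
  have hne : {n | ∃ 𝒞 : Set (Set W), 𝒞.Finite ∧ 𝒞.ncard = n ∧
      (∀ C ∈ 𝒞, G.IsClique C) ∧ ∀ w : W, ∃ C ∈ 𝒞, w ∈ C}.Nonempty := by
    refine ⟨_, Set.range (fun w => ({w} : Set W)), Set.toFinite _, rfl, ?_, fun w => ⟨{w}, ⟨w, rfl⟩, rfl⟩⟩
    rintro C ⟨w, rfl⟩
    exact Set.pairwise_singleton w G.Adj
  obtain ⟨𝒞, h1, h2, h3, h4⟩ := Nat.sInf_mem hne
  exact ⟨𝒞, h1, h2, h3, h4⟩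
/-- Crown reduction. If `I` is a nonempty independent set, `H = N(I)`,
`H ∩ I = ∅`, and there is a matching in `G` between `H` and `I` of size `|H|`,
then `θ(G) = |I| + θ(G[V ∖ (H ∪ I)])`. -/
theorem stmt_16 {V : Type*} [Fintype V] (G : SimpleGraph V) (H I : Set V)
    (hne : I.Nonempty)
    (hind : I.Pairwise fun a b => ¬ G.Adj a b)
    (hH : H = (⋃ a ∈ I, G.neighborSet a) \ I)
    (hHI : H ∩ I = ∅)
    (hmatch : ∃ f : V → V, Set.InjOn f H ∧ ∀ h ∈ H, f h ∈ I ∧ G.Adj h (f h)) :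
    G.vccNumber = I.ncard + (G.induce (H ∪ I)ᶜ).vccNumber := by
  classical
  obtain ⟨f, hfinj, hf⟩ := hmatch
  have hnbr : ∀ i ∈ I, ∀ v, G.Adj i v → v ∈ H := by
    intro i hi v hadj
    rw [hH]
    refine ⟨Set.mem_biUnion hi hadj, fun hvI => ?_⟩
    exact hind hi hvI hadj.ne hadj
  -- direction ≤
  have hle1 : G.vccNumber ≤ I.ncard + (G.induce (H ∪ I)ᶜ).vccNumber := by
    obtain ⟨𝒞', h1', h2', h3', h4'⟩ := vcc_mem (G.induce (H ∪ I)ᶜ)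
    set c : V → Set V := fun i => insert i {h | h ∈ H ∧ f h = i} with hc
    set 𝒟 : Set (Set V) := ((fun C => Subtype.val '' C) '' 𝒞') ∪ (c '' I) with h𝒟
    have hcl : ∀ C ∈ 𝒟, G.IsClique C := by
      rintro C (⟨C', hC', rfl⟩ | ⟨i, hi, rfl⟩)
      · rintro x ⟨a, ha, rfl⟩ y ⟨b, hb, rfl⟩ hxy
        have hab : a ≠ b := fun h => hxy (congrArg _ h)
        exact h3' C' hC' ha hb hab
      · rintro x hx y hy hxy
        rcases Set.mem_insert_iff.mp hx with rfl | ⟨hxH, hfx⟩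
        · rcases Set.mem_insert_iff.mp hy with rfl | ⟨hyH, hfy⟩
          · exact absurd rfl hxy
          · rw [← hfy]; exact ((hf y hyH).2).symm
        · rcases Set.mem_insert_iff.mp hy with rfl | ⟨hyH, hfy⟩
          · rw [← hfx]; exact (hf x hxH).2
          · exact absurd (hfinj hxH hyH (hfx.trans hfy.symm)) hxy
    have hcov : ∀ w : V, ∃ C ∈ 𝒟, w ∈ C := by
      intro w
      by_cases hw : w ∈ H ∪ I
      · rcases hw with hwH | hwI
        · exact ⟨c (f w), Or.inr ⟨f w, (hf w hwH).1, rfl⟩, Or.inr ⟨hwH, rfl⟩⟩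
        · exact ⟨c w, Or.inr ⟨w, hwI, rfl⟩, Or.inl rfl⟩
      · obtain ⟨C', hC', hmem⟩ := h4' ⟨w, hw⟩
        exact ⟨Subtype.val '' C', Or.inl ⟨C', hC', rfl⟩, ⟨⟨w, hw⟩, hmem, rfl⟩⟩
    have hv := vcc_le G (Set.toFinite 𝒟) hcl hcov
    have hu : 𝒟.ncard ≤ ((fun C => Subtype.val '' C) '' 𝒞').ncard + (c '' I).ncard :=
      Set.ncard_union_le _ _
    have hi1 : ((fun C => Subtype.val '' C) '' 𝒞').ncard ≤ 𝒞'.ncard :=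
      Set.ncard_image_le h1'
    have hi2 : (c '' I).ncard ≤ I.ncard := Set.ncard_image_le (Set.toFinite I)
    omega
  -- direction ≥
  obtain ⟨𝒞, k1, k2, k3, k4⟩ := vcc_mem G
  set 𝒞i := {C ∈ 𝒞 | (C ∩ I).Nonempty} with h𝒞i
  set 𝒞r := {C ∈ 𝒞 | ¬(C ∩ I).Nonempty} with h𝒞r
  have hsplit : 𝒞i.ncard + 𝒞r.ncard = 𝒞.ncard := by
    rw [← Set.ncard_union_eq (by
        rw [Set.disjoint_left]; rintro C ⟨_, h1⟩ ⟨_, h2⟩; exact h2 h1)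
      (Set.toFinite _) (Set.toFinite _)]
    congr 1
    ext C
    constructor
    · rintro (h | h) <;> exact h.1
    · intro h
      by_cases hc : (C ∩ I).Nonempty
      · exact Or.inl ⟨h, hc⟩
      · exact Or.inr ⟨h, hc⟩
  have hgex : ∀ i : V, ∃ C, C ∈ 𝒞 ∧ i ∈ C := fun i => k4 i
  choose g hg1 hg2 using hgex
  have hgI : ∀ i ∈ I, g i ∈ 𝒞i := fun i hi => ⟨hg1 i, ⟨i, hg2 i, hi⟩⟩
  have hginj : Set.InjOn g I := by
    intro i hi j hj hij
    by_contra hne'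
    have : G.Adj i j := k3 (g i) (hg1 i) (hg2 i) (by rw [hij]; exact hg2 j) hne'
    exact hind hi hj hne' this
  have hA : I.ncard ≤ 𝒞i.ncard := by
    calc I.ncard = (g '' I).ncard := (Set.ncard_image_of_injOn hginj).symm
    _ ≤ 𝒞i.ncard := Set.ncard_le_ncard (Set.image_subset_iff.mpr hgI) (Set.toFinite _)
  have hB : (G.induce (H ∪ I)ᶜ).vccNumber ≤ 𝒞r.ncard := by
    set 𝒞'' := (fun C => (Subtype.val ⁻¹' C : Set ((H ∪ I)ᶜ : Set V))) '' 𝒞r with h𝒞''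
    have hcl : ∀ D ∈ 𝒞'', (G.induce (H ∪ I)ᶜ).IsClique D := by
      rintro D ⟨C, hC, rfl⟩ a ha b hb hab
      exact k3 C hC.1 ha hb (Subtype.coe_injective.ne hab)
    have hcov : ∀ w : ((H ∪ I)ᶜ : Set V), ∃ D ∈ 𝒞'', w ∈ D := by
      intro w
      obtain ⟨C, hC, hmem⟩ := k4 w.val
      refine ⟨Subtype.val ⁻¹' C, ⟨C, ⟨hC, ?_⟩, rfl⟩, hmem⟩
      rintro ⟨i, hiC, hiI⟩
      have hwI : w.val ∉ H ∪ I := w.property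
      have hne2 : i ≠ w.val := fun h => hwI (Or.inr (h ▸ hiI))
      have hadj : G.Adj i w.val := k3 C hC hiC hmem hne2
      exact hwI (Or.inl (hnbr i hiI w.val hadj))
    have hv := vcc_le (G.induce (H ∪ I)ᶜ) (Set.toFinite 𝒞'') hcl hcov
    have hi1 : 𝒞''.ncard ≤ 𝒞r.ncard := Set.ncard_image_le (Set.toFinite _)
    omega
  omega
end
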